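/- arXiv:1511.03616 — 7 statements merged into one kernel-verified Lean document; each statement's English description precedes it below -/
import Mathlib

section
/- (Deterministic form of Lemma 3.3(i)a) Suppose 0 < α_P^low < α_A^high. Then the supremum of F(a,z,γ,δ,α_P^low,α_A^high) over all deterministic actions a, all z ∈ ℝ, all δ ∈ ℝ, and all γ with γ < -R_P(1-z)², equals G(a*, z*, α_A^high) = -ρ^{R_P/(R_A+R_P)} ((R_A+R_P)/R_P)(R_A/R_P)^{-R_A/(R_A+R_P)} exp( (R_A R_P/(R_A+R_P)) ( T(k(a*) - a*) + (T/2) α_A^high R_A R_P/(R_A+R_P) ) ). -/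
open MeasureTheory

/-- The objective `F(a,z,γ,δ,α_P,α_A)` from the first-best problem. -/
noncomputable def Fobj (R_A R_P ρ T : ℝ) (k a : ℝ → ℝ) (z γ δ αP αA : ℝ) : ℝ :=
  -Real.exp (R_P * (δ - (1 - z) * (∫ s in (0:ℝ)..T, a s)
      + (R_P * (1 - z) ^ 2 / 2 + γ / 2) * αP * T))
  - ρ * Real.exp (R_A * ((∫ s in (0:ℝ)..T, k (a s))
      - z * (∫ s in (0:ℝ)..T, a s) - δ + (R_A * z ^ 2 / 2 - γ / 2) * αA * T))

/-- The quantity `G(a,z,γ,α_P,α_A)`. -/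
noncomputable def Gobj (R_A R_P ρ T : ℝ) (k a : ℝ → ℝ) (z γ αP αA : ℝ) : ℝ :=
  -(ρ ^ (R_P / (R_A + R_P)) * ((R_A + R_P) / R_P)
      * (R_A / R_P) ^ (-(R_A / (R_A + R_P)))
      * Real.exp ((R_A * R_P / (R_A + R_P)) * ((∫ s in (0:ℝ)..T, (k (a s) - a s))
          + γ / 2 * T * (αP - αA)
          + T / 2 * (αP * R_P * (1 - z) ^ 2 + αA * R_A * z ^ 2))))

/-- A deterministic action: a measurable map `[0,T] → [0, a_max]`. -/
def IsAction (T aMax : ℝ) (a : ℝ → ℝ) : Prop :=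
  Measurable a ∧ ∀ s ∈ Set.Icc (0 : ℝ) T, a s ∈ Set.Icc (0 : ℝ) aMax

lemma expArith (R_A R_P ρ : ℝ) (hA : 0 < R_A) (hP : 0 < R_P) (hρ : 0 < ρ) (X Y : ℝ) :
    -Real.exp (R_P * ((Real.log (ρ * R_A / R_P) + R_A * Y - R_P * X) / (R_A + R_P) + X))
      - ρ * Real.exp (R_A * (Y - (Real.log (ρ * R_A / R_P) + R_A * Y - R_P * X) / (R_A + R_P)))
    = -(ρ ^ (R_P / (R_A + R_P)) * ((R_A + R_P) / R_P)
        * (R_A / R_P) ^ (-(R_A / (R_A + R_P)))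
        * Real.exp (R_A * R_P / (R_A + R_P) * (X + Y))) := by
  have hs : (0:ℝ) < R_A + R_P := by linarith
  have hs' : R_A + R_P ≠ 0 := hs.ne'
  have hq : (0:ℝ) < R_A / R_P := by positivity
  have hw : ρ * R_A / R_P = ρ * (R_A / R_P) := by ring
  have hlogw : Real.log (ρ * R_A / R_P) = Real.log ρ + Real.log (R_A / R_P) := by
    rw [hw, Real.log_mul hρ.ne' hq.ne']
  set L := Real.log (R_A / R_P) with hL
  have h1 : ρ ^ (R_P / (R_A + R_P)) = Real.exp (Real.log ρ * (R_P / (R_A + R_P))) :=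
    Real.rpow_def_of_pos hρ _
  have h2 : (R_A / R_P) ^ (-(R_A / (R_A + R_P))) = Real.exp (L * (-(R_A / (R_A + R_P)))) :=
    Real.rpow_def_of_pos hq _
  have h3 : (R_A + R_P) / R_P = 1 + Real.exp L := by
    rw [hL, Real.exp_log hq]; field_simp; ring
  rw [h1, h2, h3, hlogw]
  rw [show R_P * ((Real.log ρ + L + R_A * Y - R_P * X) / (R_A + R_P) + X)
      = (Real.log ρ * (R_P / (R_A + R_P)) + L * (-(R_A / (R_A + R_P)))
          + R_A * R_P / (R_A + R_P) * (X + Y)) + L by field_simp; ring]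
  rw [show R_A * (Y - (Real.log ρ + L + R_A * Y - R_P * X) / (R_A + R_P))
      = (Real.log ρ * (R_P / (R_A + R_P)) + L * (-(R_A / (R_A + R_P)))
          + R_A * R_P / (R_A + R_P) * (X + Y)) - Real.log ρ by field_simp; ring]
  rw [Real.exp_add, Real.exp_sub, Real.exp_add, Real.exp_add, Real.exp_log hρ]
  field_simp
  ring

lemma deltaOpt (R_A R_P ρ : ℝ) (hA : 0 < R_A) (hP : 0 < R_P) (hρ : 0 < ρ) (X Y δ : ℝ) :
    -Real.exp (R_P * (δ + X)) - ρ * Real.exp (R_A * (Y - δ))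
      ≤ -(ρ ^ (R_P / (R_A + R_P)) * ((R_A + R_P) / R_P)
        * (R_A / R_P) ^ (-(R_A / (R_A + R_P)))
        * Real.exp (R_A * R_P / (R_A + R_P) * (X + Y))) := by
  have hs : (0:ℝ) < R_A + R_P := by linarith
  set δ0 := (Real.log (ρ * R_A / R_P) + R_A * Y - R_P * X) / (R_A + R_P) with hδ0
  have key := expArith R_A R_P ρ hA hP hρ X Y
  rw [← hδ0] at key
  rw [← key]
  -- reduce to showing f(δ0) ≤ f(δ)
  have hw : (0:ℝ) < ρ * R_A / R_P := by positivity
  have hrel : R_P * (δ0 + X) = Real.log (ρ * R_A / R_P) + R_A * (Y - δ0) := by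
    rw [hδ0]; field_simp; ring
  set u := Real.exp (R_P * (δ0 + X)) with hu
  set v := ρ * Real.exp (R_A * (Y - δ0)) with hv
  have huv : R_A * v = R_P * u := by
    rw [hu, hv, hrel, Real.exp_add, Real.exp_log hw]
    field_simp
  have h1 : Real.exp (R_P * (δ + X)) = u * Real.exp (R_P * (δ - δ0)) := by
    rw [hu, ← Real.exp_add]; ring_nf
  have h2 : Real.exp (R_A * (Y - δ)) = Real.exp (R_A * (Y - δ0)) * Real.exp (-(R_A * (δ - δ0))) := by
    rw [← Real.exp_add]; ring_nf
  rw [h1, h2]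
  have hup : 0 < u := Real.exp_pos _
  have hvp : 0 < v := by positivity
  have e1 := Real.add_one_le_exp (R_P * (δ - δ0))
  have e2 := Real.add_one_le_exp (-(R_A * (δ - δ0)))
  have hvv : ρ * (Real.exp (R_A * (Y - δ0)) * Real.exp (-(R_A * (δ - δ0))))
      = v * Real.exp (-(R_A * (δ - δ0))) := by rw [hv]; ring
  rw [hvv]
  nlinarith [mul_le_mul_of_nonneg_left e1 hup.le, mul_le_mul_of_nonneg_left e2 hvp.le,
    Real.exp_pos (R_P * (δ - δ0)), Real.exp_pos (-(R_A * (δ - δ0)))]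



lemma Gval (R_A R_P ρ T : ℝ) (k : ℝ → ℝ) (astar αA : ℝ)
    (hA : 0 < R_A) (hP : 0 < R_P) :
    Gobj R_A R_P ρ T k (fun _ => astar) (R_P / (R_A + R_P)) 0 αA αA
      = -(ρ ^ (R_P / (R_A + R_P)) * ((R_A + R_P) / R_P)
          * (R_A / R_P) ^ (-(R_A / (R_A + R_P)))
          * Real.exp ((R_A * R_P / (R_A + R_P))
              * (T * (k astar - astar) + T / 2 * αA * R_A * R_P / (R_A + R_P)))) := by
  have hs : R_A + R_P ≠ 0 := by positivity
  unfold Gobj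
  simp only [intervalIntegral.integral_const, smul_eq_mul, sub_zero]
  have harg : (R_A * R_P / (R_A + R_P)) * (T * (k astar - astar)
        + 0 / 2 * T * (αA - αA)
        + T / 2 * (αA * R_P * (1 - R_P / (R_A + R_P)) ^ 2
            + αA * R_A * (R_P / (R_A + R_P)) ^ 2))
      = (R_A * R_P / (R_A + R_P))
          * (T * (k astar - astar) + T / 2 * αA * R_A * R_P / (R_A + R_P)) := by
    field_simp
    ring
  rw [harg]

lemma Fobj_le (R_A R_P ρ T aMax : ℝ) (k : ℝ → ℝ)
    (hRA : 0 < R_A) (hRP : 0 < R_P) (hρ : 0 < ρ) (hT : 0 < T) (haMax : 0 < aMax)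
    (hkcont : Continuous k) (hkmono : StrictMono k)
    (astar : ℝ) (hastar_mem : astar ∈ Set.Icc (0 : ℝ) aMax)
    (hastar_min : ∀ x ∈ Set.Icc (0 : ℝ) aMax, k astar - astar ≤ k x - x)
    (αPlow αAhigh : ℝ) (hαP : 0 < αPlow) (hlt : αPlow < αAhigh)
    (a : ℝ → ℝ) (z γ δ : ℝ) (hAct : IsAction T aMax a) (hγ : γ < -(R_P * (1 - z) ^ 2)) :
    Fobj R_A R_P ρ T k a z γ δ αPlow αAhigh
      ≤ -(ρ ^ (R_P / (R_A + R_P)) * ((R_A + R_P) / R_P)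
          * (R_A / R_P) ^ (-(R_A / (R_A + R_P)))
          * Real.exp ((R_A * R_P / (R_A + R_P))
              * (T * (k astar - astar) + T / 2 * αAhigh * R_A * R_P / (R_A + R_P)))) := by
  obtain ⟨hma, hbd⟩ := hAct
  have hs : (0:ℝ) < R_A + R_P := by linarith
  have hαA : (0:ℝ) < αAhigh := hαP.trans hlt
  have huIoc : Set.uIoc (0:ℝ) T = Set.Ioc 0 T := Set.uIoc_of_le hT.le
  have hIocIcc : Set.Ioc (0:ℝ) T ⊆ Set.Icc 0 T := Set.Ioc_subset_Icc_self
  have hmes : MeasurableSet (Set.Ioc (0:ℝ) T) := measurableSet_Ioc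
  have hconst : ∀ (c : ℝ), IntegrableOn (fun _ : ℝ => c) (Set.Ioc (0:ℝ) T) := by
    intro c
    exact integrableOn_const measure_Ioc_lt_top.ne
  have hint_a : IntervalIntegrable a volume 0 T := by
    rw [intervalIntegrable_iff, huIoc]
    refine (hconst aMax).mono' hma.aestronglyMeasurable.restrict ?_
    filter_upwards [ae_restrict_mem hmes] with s hsm
    have h := hbd s (hIocIcc hsm)
    rw [Real.norm_eq_abs, abs_le]
    exact ⟨by linarith [h.1], h.2⟩
  have hint_k : IntervalIntegrable (fun s => k (a s)) volume 0 T := by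
    rw [intervalIntegrable_iff, huIoc]
    refine (hconst (|k 0| + |k aMax|)).mono'
      ((hkcont.measurable.comp hma).aestronglyMeasurable.restrict) ?_
    filter_upwards [ae_restrict_mem hmes] with s hsm
    have h := hbd s (hIocIcc hsm)
    have h1 : k 0 ≤ k (a s) := hkmono.monotone h.1
    have h2 : k (a s) ≤ k aMax := hkmono.monotone h.2
    rw [Real.norm_eq_abs, abs_le]
    constructor
    · have := neg_abs_le (k 0); linarith [abs_nonneg (k aMax)]
    · have := le_abs_self (k aMax); linarith [abs_nonneg (k 0)]
  set I := ∫ s in (0:ℝ)..T, a s with hI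
  set Ik := ∫ s in (0:ℝ)..T, k (a s) with hIk
  have hlow : T * (k astar - astar) ≤ Ik - I := by
    have h1 : ∫ s in (0:ℝ)..T, (k (a s) - a s) = Ik - I :=
      intervalIntegral.integral_sub hint_k hint_a
    have h2 : (∫ _ in (0:ℝ)..T, (k astar - astar)) ≤ ∫ s in (0:ℝ)..T, (k (a s) - a s) := by
      refine intervalIntegral.integral_mono_on hT.le intervalIntegrable_const
        (hint_k.sub hint_a) ?_
      intro s hsm
      exact hastar_min (a s) (hbd s hsm)
    rw [intervalIntegral.integral_const, smul_eq_mul, sub_zero] at h2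
    linarith [h1 ▸ h2]
  set X := -((1 - z) * I) + (R_P * (1 - z) ^ 2 / 2 + γ / 2) * αPlow * T with hX
  set Y := Ik - z * I + (R_A * z ^ 2 / 2 - γ / 2) * αAhigh * T with hY
  have key : Fobj R_A R_P ρ T k a z γ δ αPlow αAhigh
      = -Real.exp (R_P * (δ + X)) - ρ * Real.exp (R_A * (Y - δ)) := by
    unfold Fobj
    rw [← hI, ← hIk]
    rw [show R_P * (δ - (1 - z) * I + (R_P * (1 - z) ^ 2 / 2 + γ / 2) * αPlow * T)
        = R_P * (δ + X) from by rw [hX]; ring,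
      show R_A * (Ik - z * I - δ + (R_A * z ^ 2 / 2 - γ / 2) * αAhigh * T)
        = R_A * (Y - δ) from by rw [hY]; ring]
  rw [key]
  refine le_trans (deltaOpt R_A R_P ρ hRA hRP hρ X Y δ) ?_
  have hC : (0:ℝ) < ρ ^ (R_P / (R_A + R_P)) * ((R_A + R_P) / R_P)
      * (R_A / R_P) ^ (-(R_A / (R_A + R_P))) := by positivity
  have hc : (0:ℝ) < R_A * R_P / (R_A + R_P) := by positivity
  have hXY : T * (k astar - astar) + T / 2 * αAhigh * R_A * R_P / (R_A + R_P) ≤ X + Y := by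
    rw [hX, hY]
    have hQ : R_A * R_P / (R_A + R_P) ≤ R_P * (1 - z) ^ 2 + R_A * z ^ 2 := by
      rw [div_le_iff₀ hs]
      nlinarith [sq_nonneg ((R_A + R_P) * z - R_P)]
    have h1 : (0:ℝ) ≤ (-(R_P * (1 - z) ^ 2) - γ) * (αAhigh - αPlow) * T :=
      mul_nonneg (mul_nonneg (by linarith) (by linarith)) hT.le
    have h2 : T / 2 * αAhigh * (R_A * R_P / (R_A + R_P))
        ≤ T / 2 * αAhigh * (R_P * (1 - z) ^ 2 + R_A * z ^ 2) :=
      mul_le_mul_of_nonneg_left hQ (by positivity)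
    have h3 : T / 2 * αAhigh * R_A * R_P / (R_A + R_P)
        = T / 2 * αAhigh * (R_A * R_P / (R_A + R_P)) := by ring
    nlinarith [hlow, h1, h2]
  have := Real.exp_le_exp.2 (mul_le_mul_of_nonneg_left hXY hc.le)
  nlinarith [this, hC]

lemma Fobj_exists_eq (R_A R_P ρ : ℝ) (hRA : 0 < R_A) (hRP : 0 < R_P) (hρ : 0 < ρ)
    (T : ℝ) (k : ℝ → ℝ) (astar αPlow αAhigh γ z : ℝ) :
    ∃ δ, Fobj R_A R_P ρ T k (fun _ => astar) z γ δ αPlow αAhigh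
      = -(ρ ^ (R_P / (R_A + R_P)) * ((R_A + R_P) / R_P)
          * (R_A / R_P) ^ (-(R_A / (R_A + R_P)))
          * Real.exp ((R_A * R_P / (R_A + R_P))
              * (T * (k astar - astar) + γ / 2 * T * (αPlow - αAhigh)
                + T / 2 * (αPlow * R_P * (1 - z) ^ 2 + αAhigh * R_A * z ^ 2)))) := by
  set X := -((1 - z) * (T * astar)) + (R_P * (1 - z) ^ 2 / 2 + γ / 2) * αPlow * T with hX
  set Y := T * k astar - z * (T * astar) + (R_A * z ^ 2 / 2 - γ / 2) * αAhigh * T with hY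
  refine ⟨(Real.log (ρ * R_A / R_P) + R_A * Y - R_P * X) / (R_A + R_P), ?_⟩
  set δ := (Real.log (ρ * R_A / R_P) + R_A * Y - R_P * X) / (R_A + R_P) with hδ
  have key : Fobj R_A R_P ρ T k (fun _ => astar) z γ δ αPlow αAhigh
      = -Real.exp (R_P * (δ + X)) - ρ * Real.exp (R_A * (Y - δ)) := by
    unfold Fobj
    simp only [intervalIntegral.integral_const, smul_eq_mul, sub_zero]
    rw [show R_P * (δ - (1 - z) * (T * astar) + (R_P * (1 - z) ^ 2 / 2 + γ / 2) * αPlow * T)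
        = R_P * (δ + X) from by rw [hX]; ring,
      show R_A * (T * k astar - z * (T * astar) - δ + (R_A * z ^ 2 / 2 - γ / 2) * αAhigh * T)
        = R_A * (Y - δ) from by rw [hY]; ring]
  rw [key, hδ, expArith R_A R_P ρ hRA hRP hρ X Y]
  have harg : R_A * R_P / (R_A + R_P) * (X + Y)
      = (R_A * R_P / (R_A + R_P))
          * (T * (k astar - astar) + γ / 2 * T * (αPlow - αAhigh)
            + T / 2 * (αPlow * R_P * (1 - z) ^ 2 + αAhigh * R_A * z ^ 2)) := by
    rw [hX, hY]; ring
  rw [harg]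


/-- Lemma 3.3(i)a: if `α_P^low < α_A^high`, the supremum of `F` over deterministic
actions, `z ∈ ℝ`, `δ ∈ ℝ` and `γ < -R_P(1-z)²` equals `G(a*, z*, α_A^high)`. -/
theorem sup_Q_gamma_low (R_A R_P ρ T aMax : ℝ) (k : ℝ → ℝ)
    (hRA : 0 < R_A) (hRP : 0 < R_P) (hρ : 0 < ρ) (hT : 0 < T) (haMax : 0 < aMax)
    (hkcont : Continuous k) (hkconv : StrictConvexOn ℝ Set.univ k) (hkmono : StrictMono k)
    (astar : ℝ) (hastar_mem : astar ∈ Set.Icc (0 : ℝ) aMax)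
    (hastar_min : ∀ x ∈ Set.Icc (0 : ℝ) aMax, k astar - astar ≤ k x - x)
    (αPlow αAhigh : ℝ) (hαP : 0 < αPlow) (hlt : αPlow < αAhigh) :
    IsLUB {x : ℝ | ∃ a z γ δ, IsAction T aMax a ∧ γ < -(R_P * (1 - z) ^ 2) ∧
        x = Fobj R_A R_P ρ T k a z γ δ αPlow αAhigh}
      (Gobj R_A R_P ρ T k (fun _ => astar) (R_P / (R_A + R_P)) 0 αAhigh αAhigh) ∧
    Gobj R_A R_P ρ T k (fun _ => astar) (R_P / (R_A + R_P)) 0 αAhigh αAhigh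
      = -(ρ ^ (R_P / (R_A + R_P)) * ((R_A + R_P) / R_P)
          * (R_A / R_P) ^ (-(R_A / (R_A + R_P)))
          * Real.exp ((R_A * R_P / (R_A + R_P))
              * (T * (k astar - astar) + T / 2 * αAhigh * R_A * R_P / (R_A + R_P)))) := by
  have hs : (0:ℝ) < R_A + R_P := by linarith
  have hGv := Gval R_A R_P ρ T k astar αAhigh hRA hRP
  refine ⟨⟨?_, ?_⟩, hGv⟩
  · rintro x ⟨a, z, γ, δ, hAct, hγ, rfl⟩
    rw [hGv]
    exact Fobj_le R_A R_P ρ T aMax k hRA hRP hρ hT haMax hkcont hkmono astar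
      hastar_mem hastar_min αPlow αAhigh hαP hlt a z γ δ hAct hγ
  · intro b hb
    rw [hGv]
    set γ0 := -(R_P * (1 - R_P / (R_A + R_P)) ^ 2) with hγ0
    set g : ℝ → ℝ := fun γ =>
      -(ρ ^ (R_P / (R_A + R_P)) * ((R_A + R_P) / R_P)
          * (R_A / R_P) ^ (-(R_A / (R_A + R_P)))
          * Real.exp ((R_A * R_P / (R_A + R_P))
              * (T * (k astar - astar) + γ / 2 * T * (αPlow - αAhigh)
                + T / 2 * (αPlow * R_P * (1 - R_P / (R_A + R_P)) ^ 2
                    + αAhigh * R_A * (R_P / (R_A + R_P)) ^ 2)))) with hg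
    have hcont : Continuous g := by
      rw [hg]; fun_prop
    have hmem : ∀ γ, γ < γ0 → g γ ≤ b := by
      intro γ hγ
      obtain ⟨δ, hδ⟩ := Fobj_exists_eq R_A R_P ρ hRA hRP hρ T k astar αPlow αAhigh γ
        (R_P / (R_A + R_P))
      refine hb ⟨fun _ => astar, R_P / (R_A + R_P), γ, δ,
        ⟨measurable_const, fun s _ => hastar_mem⟩, by rwa [hγ0] at hγ, ?_⟩
      rw [hg, hδ]
    have htend : Filter.Tendsto g (nhdsWithin γ0 (Set.Iio γ0)) (nhds (g γ0)) :=
      (hcont.tendsto γ0).mono_left nhdsWithin_le_nhds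
    have hfin : g γ0 ≤ b :=
      le_of_tendsto htend (Filter.eventually_of_mem self_mem_nhdsWithin fun γ hγ => hmem γ hγ)
    have hval : g γ0 = -(ρ ^ (R_P / (R_A + R_P)) * ((R_A + R_P) / R_P)
          * (R_A / R_P) ^ (-(R_A / (R_A + R_P)))
          * Real.exp ((R_A * R_P / (R_A + R_P))
              * (T * (k astar - astar) + T / 2 * αAhigh * R_A * R_P / (R_A + R_P)))) := by
      rw [hg]; beta_reduce
      have harg : (R_A * R_P / (R_A + R_P))
          * (T * (k astar - astar) + γ0 / 2 * T * (αPlow - αAhigh)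
            + T / 2 * (αPlow * R_P * (1 - R_P / (R_A + R_P)) ^ 2
                + αAhigh * R_A * (R_P / (R_A + R_P)) ^ 2))
          = (R_A * R_P / (R_A + R_P))
              * (T * (k astar - astar) + T / 2 * αAhigh * R_A * R_P / (R_A + R_P)) := by
        rw [hγ0]; field_simp; ring
      rw [harg]
    rwa [hval] at hfin
end

section
/- (Deterministic form of Lemma 3.3(i)b, (iii)b and (v)a) For every α̃ > 0 and every γ ∈ ℝ, the supremum of G(a,z,γ,α̃,α̃) over all deterministic actions a and all z ∈ ℝ equals G(a*, z*, α̃) = -ρ^{R_P/(R_A+R_P)} ((R_A+R_P)/R_P)(R_A/R_P)^{-R_A/(R_A+R_P)} exp( (R_A R_P T/(R_A+R_P)) ( k(a*) - a* + (α̃/2) R_A R_P/(R_A+R_P) ) ), and this supremum is attained at a = a*, z = z*; moreover G(a,z,γ,α̃,α̃) does not depend on γ. -/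
open MeasureTheory

/-- Lemma 3.3(i)b,(iii)b,(v)a: for any `α̃ > 0` and any `γ`, the supremum of
`G(a,z,γ,α̃,α̃)` over deterministic actions `a` and `z ∈ ℝ` equals `G(a*,z*,α̃)`,
it is attained at `(a*, z*)`, and the value does not depend on `γ`. -/
theorem sup_G_equal_vol (R_A R_P ρ T aMax : ℝ) (k : ℝ → ℝ)
    (hRA : 0 < R_A) (hRP : 0 < R_P) (hρ : 0 < ρ) (hT : 0 < T) (haMax : 0 < aMax)
    (hkcont : Continuous k) (hkconv : StrictConvexOn ℝ Set.univ k) (hkmono : StrictMono k)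
    (astar : ℝ) (hastar_mem : astar ∈ Set.Icc (0 : ℝ) aMax)
    (hastar_min : ∀ x ∈ Set.Icc (0 : ℝ) aMax, k astar - astar ≤ k x - x)
    (αtilde : ℝ) (hα : 0 < αtilde) (γ : ℝ) :
    IsGreatest {x : ℝ | ∃ a z, IsAction T aMax a ∧ x = Gobj R_A R_P ρ T k a z γ αtilde αtilde}
      (Gobj R_A R_P ρ T k (fun _ => astar) (R_P / (R_A + R_P)) γ αtilde αtilde) ∧
    Gobj R_A R_P ρ T k (fun _ => astar) (R_P / (R_A + R_P)) γ αtilde αtilde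
      = -(ρ ^ (R_P / (R_A + R_P)) * ((R_A + R_P) / R_P)
          * (R_A / R_P) ^ (-(R_A / (R_A + R_P)))
          * Real.exp ((R_A * R_P * T / (R_A + R_P))
              * (k astar - astar + αtilde / 2 * R_A * R_P / (R_A + R_P)))) ∧
    (∀ (a : ℝ → ℝ) (z γ₁ γ₂ : ℝ),
      Gobj R_A R_P ρ T k a z γ₁ αtilde αtilde = Gobj R_A R_P ρ T k a z γ₂ αtilde αtilde) := by
  have hS : (0:ℝ) < R_A + R_P := by linarith
  have hC : 0 < ρ ^ (R_P / (R_A + R_P)) * ((R_A + R_P) / R_P)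
      * (R_A / R_P) ^ (-(R_A / (R_A + R_P))) := by positivity
  have hc : (0:ℝ) < R_A * R_P / (R_A + R_P) := by positivity
  -- equality of the quadratic at z*
  have hQeq : R_P * (1 - R_P / (R_A + R_P)) ^ 2 + R_A * (R_P / (R_A + R_P)) ^ 2
      = R_A * R_P / (R_A + R_P) := by field_simp; ring
  refine ⟨⟨⟨fun _ => astar, R_P / (R_A + R_P),
      ⟨measurable_const, fun s _ => hastar_mem⟩, rfl⟩, ?_⟩, ?_, ?_⟩
  · rintro x ⟨a, z, ⟨hma, hba⟩, rfl⟩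
    unfold Gobj
    rw [neg_le_neg_iff, mul_le_mul_iff_right₀ hC, Real.exp_le_exp,
      mul_le_mul_iff_right₀ hc]
    have hInt : IntervalIntegrable (fun s => k (a s) - a s) volume 0 T := by
      rw [intervalIntegrable_iff_integrableOn_Ioc_of_le hT.le]
      apply Measure.integrableOn_of_bounded (M := |k 0| + |k aMax| + aMax)
        measure_Ioc_lt_top.ne
        ((hkcont.measurable.comp hma).sub hma).aestronglyMeasurable
      refine (ae_restrict_iff' measurableSet_Ioc).2 (Filter.Eventually.of_forall ?_)
      intro s hs
      obtain ⟨h0, h1⟩ := hba s ⟨hs.1.le, hs.2⟩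
      have hk0 : k 0 ≤ k (a s) := hkmono.monotone h0
      have hk1 : k (a s) ≤ k aMax := hkmono.monotone h1
      show ‖k (a s) - a s‖ ≤ _
      rw [Real.norm_eq_abs, abs_le]
      constructor
      · linarith [neg_abs_le (k 0), abs_nonneg (k aMax)]
      · linarith [le_abs_self (k aMax), abs_nonneg (k 0)]
    have hI : (∫ s in (0:ℝ)..T, (k ((fun _ => astar) s) - (fun _ => astar) s))
        ≤ ∫ s in (0:ℝ)..T, (k (a s) - a s) := by
      have h := intervalIntegral.integral_mono_on (μ := volume) hT.le
        (intervalIntegrable_const (c := k astar - astar)) hInt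
        (fun s hs => hastar_min (a s) (hba s hs))
      simpa using h
    have hQ : αtilde * R_P * (1 - R_P / (R_A + R_P)) ^ 2
          + αtilde * R_A * (R_P / (R_A + R_P)) ^ 2
        ≤ αtilde * R_P * (1 - z) ^ 2 + αtilde * R_A * z ^ 2 := by
      have key : R_A * R_P / (R_A + R_P) ≤ R_P * (1 - z) ^ 2 + R_A * z ^ 2 := by
        rw [div_le_iff₀ hS]
        nlinarith [sq_nonneg ((R_A + R_P) * z - R_P)]
      nlinarith [hα.le]
    have hT2 : (0:ℝ) ≤ T / 2 := by linarith
    have := mul_le_mul_of_nonneg_left hQ hT2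
    linarith [hI, this]
  · unfold Gobj
    congr 1
    rw [intervalIntegral.integral_const]
    congr 1
    congr 1
    field_simp
    ring
  · intro a z γ₁ γ₂
    simp [Gobj, sub_self, mul_zero, add_zero]
end

section
/- (Deterministic form of Lemma 3.3(ii)) Let α_A^high > 0. For every α_P > 0, the supremum of F(a, z, -R_P(1-z)², δ, α_P, α_A^high) over all deterministic actions a, z ∈ ℝ and δ ∈ ℝ equals G(a*, z*, α_A^high); in particular this supremum does not depend on α_P and it is attained at a = a*, z = z*. -/
open MeasureTheory

/-- Exact value of the inner expression at the optimal `δ₀`. -/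
private lemma aux_min (R_A R_P ρ u v : ℝ) (hRA : 0 < R_A) (hRP : 0 < R_P) (hρ : 0 < ρ) :
    Real.exp (R_P * ((Real.log (R_A * ρ / R_P) + R_A * v - R_P * u) / (R_A + R_P) + u))
      + ρ * Real.exp (R_A * (v - (Real.log (R_A * ρ / R_P) + R_A * v - R_P * u) / (R_A + R_P)))
    = ((R_A + R_P) / R_A) *
        Real.exp ((R_P * Real.log (R_A * ρ / R_P) + R_P * R_A * (u + v)) / (R_A + R_P)) := by
  have hpq : (0:ℝ) < R_A + R_P := by linarith
  have hL : Real.log (R_A * ρ / R_P) = Real.log R_A + Real.log ρ - Real.log R_P := by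
    rw [Real.log_div (by positivity) hRP.ne', Real.log_mul hRA.ne' hρ.ne']
  set L := Real.log (R_A * ρ / R_P) with hLdef
  have h1 : R_P * ((L + R_A * v - R_P * u) / (R_A + R_P) + u)
      = (R_P * L + R_P * R_A * (u + v)) / (R_A + R_P) := by field_simp; ring
  have h2 : ρ * Real.exp (R_A * (v - (L + R_A * v - R_P * u) / (R_A + R_P)))
      = (R_P / R_A) * Real.exp ((R_P * L + R_P * R_A * (u + v)) / (R_A + R_P)) := by
    have hpe : R_P / R_A = Real.exp (Real.log R_P - Real.log R_A) := by
      rw [Real.exp_sub, Real.exp_log hRP, Real.exp_log hRA]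
    rw [show ρ * Real.exp (R_A * (v - (L + R_A * v - R_P * u) / (R_A + R_P)))
        = Real.exp (Real.log ρ) * Real.exp (R_A * (v - (L + R_A * v - R_P * u) / (R_A + R_P)))
        by rw [Real.exp_log hρ], hpe, ← Real.exp_add, ← Real.exp_add]
    congr 1
    rw [hL]
    field_simp
    ring
  rw [h1, h2]
  field_simp

/-- Balance condition at the optimal `δ₀`. -/
private lemma aux_bal (R_A R_P ρ u v : ℝ) (hRA : 0 < R_A) (hRP : 0 < R_P) (hρ : 0 < ρ) :
    R_P * Real.exp (R_P * ((Real.log (R_A * ρ / R_P) + R_A * v - R_P * u) / (R_A + R_P) + u))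
    = R_A * (ρ * Real.exp (R_A * (v - (Real.log (R_A * ρ / R_P) + R_A * v - R_P * u) / (R_A + R_P)))) := by
  have hpq : (0:ℝ) < R_A + R_P := by linarith
  have hL : Real.log (R_A * ρ / R_P) = Real.log R_A + Real.log ρ - Real.log R_P := by
    rw [Real.log_div (by positivity) hRP.ne', Real.log_mul hRA.ne' hρ.ne']
  set L := Real.log (R_A * ρ / R_P) with hLdef
  have hρe : ρ = Real.exp (Real.log ρ) := (Real.exp_log hρ).symm
  have hpe : R_P = Real.exp (Real.log R_P) := (Real.exp_log hRP).symm
  have hqe : R_A = Real.exp (Real.log R_A) := (Real.exp_log hRA).symm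
  calc R_P * Real.exp (R_P * ((L + R_A * v - R_P * u) / (R_A + R_P) + u))
      = Real.exp (Real.log R_P + R_P * ((L + R_A * v - R_P * u) / (R_A + R_P) + u)) := by
        rw [Real.exp_add, ← hpe]
    _ = Real.exp (Real.log R_A + (Real.log ρ + R_A * (v - (L + R_A * v - R_P * u) / (R_A + R_P)))) := by
        congr 1
        rw [hL]
        field_simp
        ring
    _ = R_A * (ρ * Real.exp (R_A * (v - (L + R_A * v - R_P * u) / (R_A + R_P)))) := by
        rw [Real.exp_add, Real.exp_add, ← hρe, ← hqe]

/-- Lower bound: the inner expression at any `δ` is at least the value at `δ₀`. -/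
private lemma aux_ge (R_A R_P ρ u v δ : ℝ) (hRA : 0 < R_A) (hRP : 0 < R_P) (hρ : 0 < ρ) :
    ((R_A + R_P) / R_A) *
        Real.exp ((R_P * Real.log (R_A * ρ / R_P) + R_P * R_A * (u + v)) / (R_A + R_P))
      ≤ Real.exp (R_P * (δ + u)) + ρ * Real.exp (R_A * (v - δ)) := by
  set δ₀ := (Real.log (R_A * ρ / R_P) + R_A * v - R_P * u) / (R_A + R_P) with hδ₀
  rw [← aux_min R_A R_P ρ u v hRA hRP hρ]
  set e₁ := Real.exp (R_P * (δ₀ + u)) with he₁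
  set e₂ := ρ * Real.exp (R_A * (v - δ₀)) with he₂
  have hbal : R_P * e₁ = R_A * e₂ := aux_bal R_A R_P ρ u v hRA hRP hρ
  have ht1 : e₁ * (1 + R_P * (δ - δ₀)) ≤ Real.exp (R_P * (δ + u)) := by
    have h := Real.add_one_le_exp (R_P * (δ - δ₀))
    have hsplit : Real.exp (R_P * (δ + u)) = e₁ * Real.exp (R_P * (δ - δ₀)) := by
      rw [he₁, ← Real.exp_add]; congr 1; ring
    rw [hsplit]
    have he₁pos : 0 < e₁ := Real.exp_pos _
    nlinarith
  have ht2 : e₂ * (1 + R_A * (δ₀ - δ)) ≤ ρ * Real.exp (R_A * (v - δ)) := by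
    have h := Real.add_one_le_exp (R_A * (δ₀ - δ))
    have hsplit : ρ * Real.exp (R_A * (v - δ)) = e₂ * Real.exp (R_A * (δ₀ - δ)) := by
      rw [he₂, mul_assoc, ← Real.exp_add]; congr 2; ring
    rw [hsplit]
    have he₂pos : 0 < e₂ := by positivity
    nlinarith
  have hkey : e₁ * (1 + R_P * (δ - δ₀)) + e₂ * (1 + R_A * (δ₀ - δ)) = e₁ + e₂ := by
    linear_combination (δ - δ₀) * hbal
  linarith

/-- The constant in `Gobj` coincides with the one coming from the optimization in `δ`. -/
private lemma aux_const (R_A R_P ρ : ℝ) (hRA : 0 < R_A) (hRP : 0 < R_P) (hρ : 0 < ρ) :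
    ρ ^ (R_P / (R_A + R_P)) * ((R_A + R_P) / R_P) * (R_A / R_P) ^ (-(R_A / (R_A + R_P)))
    = ((R_A + R_P) / R_A) * Real.exp ((R_P * Real.log (R_A * ρ / R_P)) / (R_A + R_P)) := by
  have hpq : (0:ℝ) < R_A + R_P := by linarith
  have hL : Real.log (R_A * ρ / R_P) = Real.log R_A + Real.log ρ - Real.log R_P := by
    rw [Real.log_div (by positivity) hRP.ne', Real.log_mul hRA.ne' hρ.ne']
  have h1 : ρ ^ (R_P / (R_A + R_P)) = Real.exp (Real.log ρ * (R_P / (R_A + R_P))) :=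
    Real.rpow_def_of_pos hρ _
  have h2 : (R_A / R_P) ^ (-(R_A / (R_A + R_P)))
      = Real.exp (Real.log (R_A / R_P) * (-(R_A / (R_A + R_P)))) :=
    Real.rpow_def_of_pos (by positivity) _
  have h3 : (R_A + R_P) / R_P = ((R_A + R_P) / R_A) * Real.exp (Real.log R_A - Real.log R_P) := by
    rw [Real.exp_sub, Real.exp_log hRA, Real.exp_log hRP]
    field_simp
  have hqp : Real.log (R_A / R_P) = Real.log R_A - Real.log R_P := Real.log_div hRA.ne' hRP.ne'
  rw [h1, h2, h3, hqp]
  rw [show Real.exp (Real.log ρ * (R_P / (R_A + R_P))) * ((R_A + R_P) / R_A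
      * Real.exp (Real.log R_A - Real.log R_P))
      * Real.exp ((Real.log R_A - Real.log R_P) * (-(R_A / (R_A + R_P))))
    = ((R_A + R_P) / R_A) * Real.exp (Real.log ρ * (R_P / (R_A + R_P))
        + (Real.log R_A - Real.log R_P)
        + (Real.log R_A - Real.log R_P) * (-(R_A / (R_A + R_P)))) from by
      rw [Real.exp_add, Real.exp_add]; ring]
  congr 1
  rw [hL]
  field_simp
  ring

/-- Integrability of `f ∘ a` for a deterministic action `a` and continuous `f`. -/
private lemma aux_int (T aMax : ℝ) (hT : 0 < T) (a : ℝ → ℝ) (ha : IsAction T aMax a)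
    (f : ℝ → ℝ) (hf : Continuous f) :
    IntervalIntegrable (fun s => f (a s)) volume 0 T := by
  obtain ⟨C, hC⟩ := (isCompact_Icc : IsCompact (Set.Icc (0:ℝ) aMax)).exists_bound_of_continuousOn
    hf.continuousOn
  rw [intervalIntegrable_iff, Set.uIoc_of_le hT.le]
  apply Measure.integrableOn_of_bounded (M := C) (by simp)
    ((hf.measurable.comp ha.1).aestronglyMeasurable)
  rw [ae_restrict_iff' measurableSet_Ioc]
  filter_upwards with x hx
  exact hC _ (ha.2 x ⟨hx.1.le, hx.2⟩)

/-- Rewriting `Fobj` at `γ = -R_P (1-z)²` in the canonical form. -/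
private lemma aux_F (R_A R_P ρ T : ℝ) (k a : ℝ → ℝ) (z δ αP αA : ℝ) :
    Fobj R_A R_P ρ T k a z (-(R_P * (1 - z) ^ 2)) δ αP αA
    = -(Real.exp (R_P * (δ + (-(1 - z) * (∫ s in (0:ℝ)..T, a s))))
        + ρ * Real.exp (R_A * (((∫ s in (0:ℝ)..T, k (a s)) - z * (∫ s in (0:ℝ)..T, a s)
            + (R_A * z ^ 2 / 2 + R_P * (1 - z) ^ 2 / 2) * αA * T) - δ))) := by
  unfold Fobj
  rw [show R_P * (δ - (1 - z) * (∫ s in (0:ℝ)..T, a s)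
      + (R_P * (1 - z) ^ 2 / 2 + (-(R_P * (1 - z) ^ 2)) / 2) * αP * T)
    = R_P * (δ + (-(1 - z) * (∫ s in (0:ℝ)..T, a s))) from by ring]
  rw [show R_A * ((∫ s in (0:ℝ)..T, k (a s)) - z * (∫ s in (0:ℝ)..T, a s) - δ
      + (R_A * z ^ 2 / 2 - (-(R_P * (1 - z) ^ 2)) / 2) * αA * T)
    = R_A * (((∫ s in (0:ℝ)..T, k (a s)) - z * (∫ s in (0:ℝ)..T, a s)
        + (R_A * z ^ 2 / 2 + R_P * (1 - z) ^ 2 / 2) * αA * T) - δ) from by ring]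
  ring


/-- Purely algebraic upper bound for the canonical form of `Fobj`. -/
private lemma aux_ub (R_A R_P ρ T kst αA K A z δ : ℝ)
    (hRA : 0 < R_A) (hRP : 0 < R_P) (hρ : 0 < ρ) (hαT : 0 ≤ αA * T)
    (hKA : T * kst ≤ K - A) :
    -(Real.exp (R_P * (δ + (-(1 - z) * A)))
        + ρ * Real.exp (R_A * ((K - z * A
            + (R_A * z ^ 2 / 2 + R_P * (1 - z) ^ 2 / 2) * αA * T) - δ)))
    ≤ -(((R_A + R_P) / R_A) * Real.exp ((R_P * Real.log (R_A * ρ / R_P)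
        + R_P * R_A * (T * kst + αA * T * (R_A * R_P / (R_A + R_P)) / 2)) / (R_A + R_P))) := by
  have hpq : (0:ℝ) < R_A + R_P := by linarith
  have hz : R_A * R_P / (R_A + R_P) ≤ R_A * z ^ 2 + R_P * (1 - z) ^ 2 := by
    rw [div_le_iff₀ hpq]
    nlinarith [sq_nonneg ((R_A + R_P) * z - R_P)]
  have hS : T * kst + αA * T * (R_A * R_P / (R_A + R_P)) / 2
      ≤ (-(1 - z) * A) + (K - z * A + (R_A * z ^ 2 / 2 + R_P * (1 - z) ^ 2 / 2) * αA * T) := by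
    have e1 : (-(1 - z) * A) + (K - z * A + (R_A * z ^ 2 / 2 + R_P * (1 - z) ^ 2 / 2) * αA * T)
        = (K - A) + αA * T * (R_A * z ^ 2 + R_P * (1 - z) ^ 2) / 2 := by ring
    rw [e1]
    have hmul := mul_le_mul_of_nonneg_left hz hαT
    linarith
  have hge := aux_ge R_A R_P ρ (-(1 - z) * A)
    (K - z * A + (R_A * z ^ 2 / 2 + R_P * (1 - z) ^ 2 / 2) * αA * T) δ hRA hRP hρ
  have hexp : ((R_A + R_P) / R_A) * Real.exp ((R_P * Real.log (R_A * ρ / R_P)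
        + R_P * R_A * (T * kst + αA * T * (R_A * R_P / (R_A + R_P)) / 2)) / (R_A + R_P))
      ≤ ((R_A + R_P) / R_A) * Real.exp ((R_P * Real.log (R_A * ρ / R_P)
        + R_P * R_A * ((-(1 - z) * A) + (K - z * A
          + (R_A * z ^ 2 / 2 + R_P * (1 - z) ^ 2 / 2) * αA * T))) / (R_A + R_P)) := by
    have hpos : (0:ℝ) ≤ (R_A + R_P) / R_A := by positivity
    refine mul_le_mul_of_nonneg_left (Real.exp_le_exp.2 ?_) hpos
    refine (div_le_div_iff_of_pos_right hpq).2 ?_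
    have := mul_le_mul_of_nonneg_left hS (show (0:ℝ) ≤ R_P * R_A by positivity)
    linarith
  linarith

/-- Lemma 3.3(ii): for any `α_P > 0`, the supremum of `F(a,z,-R_P(1-z)²,δ,α_P,α_A^high)`
over deterministic actions, `z` and `δ`, equals `G(a*,z*,α_A^high)`; in particular it
does not depend on `α_P`, and it is attained at `a = a*`, `z = z*`. -/
theorem sup_Q_diag (R_A R_P ρ T aMax : ℝ) (k : ℝ → ℝ)
    (hRA : 0 < R_A) (hRP : 0 < R_P) (hρ : 0 < ρ) (hT : 0 < T) (haMax : 0 < aMax)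
    (hkcont : Continuous k) (hkconv : StrictConvexOn ℝ Set.univ k) (hkmono : StrictMono k)
    (astar : ℝ) (hastar_mem : astar ∈ Set.Icc (0 : ℝ) aMax)
    (hastar_min : ∀ x ∈ Set.Icc (0 : ℝ) aMax, k astar - astar ≤ k x - x)
    (αAhigh : ℝ) (hαA : 0 < αAhigh) (αP : ℝ) (hαP : 0 < αP) :
    IsGreatest {x : ℝ | ∃ a z δ, IsAction T aMax a ∧
        x = Fobj R_A R_P ρ T k a z (-(R_P * (1 - z) ^ 2)) δ αP αAhigh}
      (Gobj R_A R_P ρ T k (fun _ => astar) (R_P / (R_A + R_P)) 0 αAhigh αAhigh) ∧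
    (∃ δ : ℝ, Fobj R_A R_P ρ T k (fun _ => astar) (R_P / (R_A + R_P))
        (-(R_P * (1 - R_P / (R_A + R_P)) ^ 2)) δ αP αAhigh
      = Gobj R_A R_P ρ T k (fun _ => astar) (R_P / (R_A + R_P)) 0 αAhigh αAhigh) := by
  have hpq : (0:ℝ) < R_A + R_P := by linarith
  -- the value of Gobj at the optimizer
  have hGeq : Gobj R_A R_P ρ T k (fun _ => astar) (R_P / (R_A + R_P)) 0 αAhigh αAhigh
      = -(((R_A + R_P) / R_A) * Real.exp ((R_P * Real.log (R_A * ρ / R_P)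
          + R_P * R_A * (T * (k astar - astar)
            + αAhigh * T * (R_A * R_P / (R_A + R_P)) / 2)) / (R_A + R_P))) := by
    unfold Gobj
    rw [aux_const R_A R_P ρ hRA hRP hρ]
    simp only [intervalIntegral.integral_const, smul_eq_mul, sub_zero]
    rw [mul_assoc, ← Real.exp_add]
    congr 2
    rw [Real.exp_eq_exp]
    field_simp
    ring
  -- the optimal δ for the candidate (astar, z*)
  set vstar : ℝ := T * k astar - R_P / (R_A + R_P) * (T * astar)
      + (R_A * (R_P / (R_A + R_P)) ^ 2 / 2 + R_P * (1 - R_P / (R_A + R_P)) ^ 2 / 2) * αAhigh * T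
    with hvstar
  set ustar : ℝ := -(1 - R_P / (R_A + R_P)) * (T * astar) with hustar
  set δstar : ℝ := (Real.log (R_A * ρ / R_P) + R_A * vstar - R_P * ustar) / (R_A + R_P)
    with hδstar
  -- F at the candidate equals Gobj
  have hFstar : Fobj R_A R_P ρ T k (fun _ => astar) (R_P / (R_A + R_P))
      (-(R_P * (1 - R_P / (R_A + R_P)) ^ 2)) δstar αP αAhigh
      = Gobj R_A R_P ρ T k (fun _ => astar) (R_P / (R_A + R_P)) 0 αAhigh αAhigh := by
    rw [aux_F, hGeq]
    simp only [intervalIntegral.integral_const, smul_eq_mul, sub_zero]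
    rw [show (T * k astar - R_P / (R_A + R_P) * (T * astar)
        + (R_A * (R_P / (R_A + R_P)) ^ 2 / 2 + R_P * (1 - R_P / (R_A + R_P)) ^ 2 / 2)
          * αAhigh * T) = vstar from hvstar.symm]
    rw [show (-(1 - R_P / (R_A + R_P)) * (T * astar)) = ustar from hustar.symm]
    rw [hδstar, aux_min R_A R_P ρ ustar vstar hRA hRP hρ]
    congr 2
    rw [Real.exp_eq_exp, hustar, hvstar]
    field_simp
    ring
  -- upper bound
  have hub : ∀ a z δ, IsAction T aMax a →
      Fobj R_A R_P ρ T k a z (-(R_P * (1 - z) ^ 2)) δ αP αAhigh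
        ≤ Gobj R_A R_P ρ T k (fun _ => astar) (R_P / (R_A + R_P)) 0 αAhigh αAhigh := by
    intro a z δ ha
    have hint_a : IntervalIntegrable a volume 0 T := by
      have h := aux_int T aMax hT a ha id continuous_id
      simpa using h
    have hint_k : IntervalIntegrable (fun s => k (a s)) volume 0 T :=
      aux_int T aMax hT a ha k hkcont
    have hmono : T * (k astar - astar) ≤ ∫ s in (0:ℝ)..T, (k (a s) - a s) := by
      have h1 : (∫ _ in (0:ℝ)..T, (k astar - astar)) = T * (k astar - astar) := by
        rw [intervalIntegral.integral_const, smul_eq_mul, sub_zero]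
      rw [← h1]
      exact intervalIntegral.integral_mono_on hT.le intervalIntegrable_const
        (hint_k.sub hint_a) (fun x hx => hastar_min _ (ha.2 x hx))
    have hKA : (∫ s in (0:ℝ)..T, k (a s)) - (∫ s in (0:ℝ)..T, a s)
        = ∫ s in (0:ℝ)..T, (k (a s) - a s) :=
      (intervalIntegral.integral_sub hint_k hint_a).symm
    rw [aux_F, hGeq]
    exact aux_ub R_A R_P ρ T (k astar - astar) αAhigh
      (∫ s in (0:ℝ)..T, k (a s)) (∫ s in (0:ℝ)..T, a s) z δ hRA hRP hρ
      (by positivity) (by rw [hKA]; exact hmono)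
  refine ⟨⟨?_, ?_⟩, ⟨δstar, hFstar⟩⟩
  · exact ⟨fun _ => astar, R_P / (R_A + R_P), δstar,
      ⟨measurable_const, fun s _ => hastar_mem⟩, hFstar.symm⟩
  · rintro x ⟨a, z, δ, ha, rfl⟩
    exact hub a z δ ha
end

section
/- (Deterministic form of Lemma 3.3(iii)a) Suppose 0 < α_P^high < α_A^high. Then the supremum of F(a,z,γ,δ,α_P^high,α_A^high) over all deterministic actions a, all z ∈ ℝ, all δ ∈ ℝ, and all γ with -R_P(1-z)² < γ < R_A z², equals G(a*, z*, α_P^high). -/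
open MeasureTheory

noncomputable def Dconst (R_A R_P ρ : ℝ) : ℝ :=
  ρ ^ (R_P / (R_A + R_P)) * (R_A + R_P) * R_A ^ (-(R_A / (R_A + R_P)))
    * R_P ^ (-(R_P / (R_A + R_P)))
lemma Dconst_exp {R_A R_P ρ : ℝ} (hRA : 0 < R_A) (hRP : 0 < R_P) (hρ : 0 < ρ) :
    Dconst R_A R_P ρ = Real.exp (R_P / (R_A + R_P) * Real.log ρ + Real.log (R_A + R_P)
      - R_A / (R_A + R_P) * Real.log R_A - R_P / (R_A + R_P) * Real.log R_P) := by
  have hS : (0:ℝ) < R_A + R_P := by linarith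
  calc Dconst R_A R_P ρ
      = Real.exp (Real.log ρ * (R_P / (R_A + R_P))) * Real.exp (Real.log (R_A + R_P))
        * Real.exp (Real.log R_A * (-(R_A / (R_A + R_P))))
        * Real.exp (Real.log R_P * (-(R_P / (R_A + R_P)))) := by
        rw [Dconst, Real.rpow_def_of_pos hρ, Real.rpow_def_of_pos hRA,
          Real.rpow_def_of_pos hRP, Real.exp_log hS]
    _ = _ := by rw [← Real.exp_add, ← Real.exp_add, ← Real.exp_add]; congr 1; ring

lemma Dconst_pos {R_A R_P ρ : ℝ} (hRA : 0 < R_A) (hRP : 0 < R_P) (hρ : 0 < ρ) :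
    0 < Dconst R_A R_P ρ := by
  rw [Dconst_exp hRA hRP hρ]; exact Real.exp_pos _

/-- The constant appearing in `Gobj` equals `Dconst`. -/
lemma Gconst_eq {R_A R_P ρ : ℝ} (hRA : 0 < R_A) (hRP : 0 < R_P) (hρ : 0 < ρ) :
    ρ ^ (R_P / (R_A + R_P)) * ((R_A + R_P) / R_P) * (R_A / R_P) ^ (-(R_A / (R_A + R_P)))
      = Dconst R_A R_P ρ := by
  have hS : (0:ℝ) < R_A + R_P := by linarith
  have hpq : R_A / (R_A + R_P) + R_P / (R_A + R_P) = 1 := by field_simp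
  calc ρ ^ (R_P / (R_A + R_P)) * ((R_A + R_P) / R_P) * (R_A / R_P) ^ (-(R_A / (R_A + R_P)))
      = Real.exp (Real.log ρ * (R_P / (R_A + R_P)))
        * Real.exp (Real.log ((R_A + R_P) / R_P))
        * Real.exp (Real.log (R_A / R_P) * (-(R_A / (R_A + R_P)))) := by
        rw [Real.rpow_def_of_pos hρ, Real.rpow_def_of_pos (div_pos hRA hRP),
          Real.exp_log (div_pos hS hRP)]
    _ = Dconst R_A R_P ρ := by
        rw [← Real.exp_add, ← Real.exp_add, Dconst_exp hRA hRP hρ,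
          Real.log_div hS.ne' hRP.ne', Real.log_div hRA.ne' hRP.ne']
        congr 1
        linear_combination Real.log R_P * hpq

/-- Weighted AM–GM bound: pointwise supremum over δ. -/
lemma F_le_D {R_A R_P ρ : ℝ} (hRA : 0 < R_A) (hRP : 0 < R_P) (hρ : 0 < ρ) (X Y : ℝ) :
    -Real.exp X - ρ * Real.exp Y ≤
      -(Dconst R_A R_P ρ *
        Real.exp (R_A / (R_A + R_P) * X + R_P / (R_A + R_P) * Y)) := by
  have hS : (0:ℝ) < R_A + R_P := by linarith
  have hp : 0 < R_A / (R_A + R_P) := div_pos hRA hS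
  have hq : 0 < R_P / (R_A + R_P) := div_pos hRP hS
  have hpq : R_A / (R_A + R_P) + R_P / (R_A + R_P) = 1 := by field_simp
  have h := Real.geom_mean_le_arith_mean2_weighted hp.le hq.le
    (le_of_lt (by positivity : (0:ℝ) < Real.exp X / (R_A / (R_A + R_P))))
    (le_of_lt (by positivity : (0:ℝ) < ρ * Real.exp Y / (R_P / (R_A + R_P)))) hpq
  have hr : R_A / (R_A + R_P) * (Real.exp X / (R_A / (R_A + R_P)))
      + R_P / (R_A + R_P) * (ρ * Real.exp Y / (R_P / (R_A + R_P)))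
      = Real.exp X + ρ * Real.exp Y := by field_simp
  have hl : (Real.exp X / (R_A / (R_A + R_P))) ^ (R_A / (R_A + R_P))
      * (ρ * Real.exp Y / (R_P / (R_A + R_P))) ^ (R_P / (R_A + R_P))
      = Dconst R_A R_P ρ * Real.exp (R_A / (R_A + R_P) * X + R_P / (R_A + R_P) * Y) := by
    rw [Real.rpow_def_of_pos (by positivity), Real.rpow_def_of_pos (by positivity),
      ← Real.exp_add, Dconst_exp hRA hRP hρ, ← Real.exp_add,
      Real.log_div (Real.exp_ne_zero X) hp.ne', Real.log_exp,
      Real.log_div (by positivity) hq.ne', Real.log_mul hρ.ne' (Real.exp_ne_zero Y),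
      Real.log_exp, Real.log_div hRA.ne' hS.ne', Real.log_div hRP.ne' hS.ne']
    congr 1
    linear_combination Real.log (R_A + R_P) * hpq
  rw [hr, hl] at h
  linarith

/-- Attainment: with the optimal δ, the value is exactly `-(D · exp(c(A+B)))`. -/
lemma F_attain {R_A R_P ρ : ℝ} (hRA : 0 < R_A) (hRP : 0 < R_P) (hρ : 0 < ρ) (A B : ℝ) :
    -Real.exp (R_P * ((Real.log (ρ * R_A / R_P) - R_P * A + R_A * B) / (R_A + R_P) + A))
      - ρ * Real.exp (R_A * (B - (Real.log (ρ * R_A / R_P) - R_P * A + R_A * B) / (R_A + R_P)))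
      = -(Dconst R_A R_P ρ * Real.exp (R_A * R_P / (R_A + R_P) * (A + B))) := by
  have hS : (0:ℝ) < R_A + R_P := by linarith
  set L := Real.log (ρ * R_A / R_P) with hL
  have hX : R_P * ((L - R_P * A + R_A * B) / (R_A + R_P) + A)
      = R_P / (R_A + R_P) * L + R_A * R_P / (R_A + R_P) * (A + B) := by
    field_simp; ring
  have hY : R_A * (B - (L - R_P * A + R_A * B) / (R_A + R_P))
      = -(R_A / (R_A + R_P)) * L + R_A * R_P / (R_A + R_P) * (A + B) := by
    field_simp; ring
  rw [hX, hY]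
  have hLval : L = Real.log ρ + Real.log R_A - Real.log R_P := by
    rw [hL, Real.log_div (by positivity) hRP.ne', Real.log_mul hρ.ne' hRA.ne']
  have hpq : R_A / (R_A + R_P) + R_P / (R_A + R_P) = 1 := by field_simp
  set c := R_A * R_P / (R_A + R_P) with hc
  set E := R_P / (R_A + R_P) * Real.log ρ - R_A / (R_A + R_P) * Real.log R_A
      - R_P / (R_A + R_P) * Real.log R_P with hE
  have h1 : Real.exp (R_P / (R_A + R_P) * L + c * (A + B))
      = Real.exp (E + c * (A + B)) * R_A := by
    calc Real.exp (R_P / (R_A + R_P) * L + c * (A + B))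
        = Real.exp ((E + c * (A + B)) + Real.log R_A) := by
          congr 1; rw [hLval, hE]; linear_combination Real.log R_A * hpq
      _ = Real.exp (E + c * (A + B)) * R_A := by rw [Real.exp_add, Real.exp_log hRA]
  have h2 : ρ * Real.exp (-(R_A / (R_A + R_P)) * L + c * (A + B))
      = Real.exp (E + c * (A + B)) * R_P := by
    calc ρ * Real.exp (-(R_A / (R_A + R_P)) * L + c * (A + B))
        = Real.exp (Real.log ρ) * Real.exp (-(R_A / (R_A + R_P)) * L + c * (A + B)) := by
          rw [Real.exp_log hρ]
      _ = Real.exp ((E + c * (A + B)) + Real.log R_P) := by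
          rw [← Real.exp_add]; congr 1; rw [hLval, hE]
          linear_combination (Real.log R_P - Real.log ρ) * hpq
      _ = Real.exp (E + c * (A + B)) * R_P := by rw [Real.exp_add, Real.exp_log hRP]
  rw [h1, h2, Dconst_exp hRA hRP hρ]
  calc -(Real.exp (E + c * (A + B)) * R_A) - Real.exp (E + c * (A + B)) * R_P
      = -(Real.exp (E + c * (A + B)) * Real.exp (Real.log (R_A + R_P))) := by
        rw [Real.exp_log hS]; ring
    _ = -(Real.exp (R_P / (R_A + R_P) * Real.log ρ + Real.log (R_A + R_P)
          - R_A / (R_A + R_P) * Real.log R_A - R_P / (R_A + R_P) * Real.log R_P)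
          * Real.exp (c * (A + B))) := by
        rw [← Real.exp_add, ← Real.exp_add]; congr 1; rw [hE]; ring

/-- Interval integrability of a measurable function bounded on `[0,T]`. -/
lemma intervalIntegrable_of_bdd {f : ℝ → ℝ} {T M : ℝ} (hT : 0 ≤ T) (hf : Measurable f)
    (hbd : ∀ s ∈ Set.Icc (0:ℝ) T, |f s| ≤ M) : IntervalIntegrable f volume 0 T := by
  rw [intervalIntegrable_iff_integrableOn_Ioc_of_le hT]
  refine Integrable.mono' (g := fun _ => M)
    ((integrableOn_const_iff (C := M)).2 (Or.inr measure_Ioc_lt_top))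
    hf.aestronglyMeasurable.restrict ?_
  filter_upwards [ae_restrict_mem measurableSet_Ioc] with s hs
  rw [Real.norm_eq_abs]
  exact hbd s ⟨hs.1.le, hs.2⟩


set_option maxHeartbeats 1600000 in
/-- Lemma 3.3(iii)a: if `α_P^high < α_A^high`, the supremum of `F` over deterministic
actions, `z`, `δ` and `-R_P(1-z)² < γ < R_A z²` equals `G(a*, z*, α_P^high)`. -/
theorem sup_Q_mid_low (R_A R_P ρ T aMax : ℝ) (k : ℝ → ℝ)
    (hRA : 0 < R_A) (hRP : 0 < R_P) (hρ : 0 < ρ) (hT : 0 < T) (haMax : 0 < aMax)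
    (hkcont : Continuous k) (hkconv : StrictConvexOn ℝ Set.univ k) (hkmono : StrictMono k)
    (astar : ℝ) (hastar_mem : astar ∈ Set.Icc (0 : ℝ) aMax)
    (hastar_min : ∀ x ∈ Set.Icc (0 : ℝ) aMax, k astar - astar ≤ k x - x)
    (αPhigh αAhigh : ℝ) (hαP : 0 < αPhigh) (hlt : αPhigh < αAhigh) :
    IsLUB {x : ℝ | ∃ a z γ δ, IsAction T aMax a ∧
        -(R_P * (1 - z) ^ 2) < γ ∧ γ < R_A * z ^ 2 ∧
        x = Fobj R_A R_P ρ T k a z γ δ αPhigh αAhigh}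
      (Gobj R_A R_P ρ T k (fun _ => astar) (R_P / (R_A + R_P)) 0 αPhigh αPhigh) := by
  have hS : (0:ℝ) < R_A + R_P := by linarith
  set c := R_A * R_P / (R_A + R_P) with hc
  have hcpos : 0 < c := by positivity
  set Estar := T * (k astar - astar) + T / 2 * (αPhigh * c) with hEstar
  have hquad : R_P * (1 - R_P / (R_A + R_P)) ^ 2 + R_A * (R_P / (R_A + R_P)) ^ 2
      = R_A * R_P / (R_A + R_P) := by field_simp; ring
  -- rewrite the target value
  have hG : Gobj R_A R_P ρ T k (fun _ => astar) (R_P / (R_A + R_P)) 0 αPhigh αPhigh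
      = -(Dconst R_A R_P ρ * Real.exp (c * Estar)) := by
    simp only [Gobj]
    rw [Gconst_eq hRA hRP hρ, intervalIntegral.integral_const, smul_eq_mul]
    have harg : R_A * R_P / (R_A + R_P) * ((T - 0) * (k astar - astar)
        + 0 / 2 * T * (αPhigh - αPhigh)
        + T / 2 * (αPhigh * R_P * (1 - R_P / (R_A + R_P)) ^ 2
          + αPhigh * R_A * (R_P / (R_A + R_P)) ^ 2)) = c * Estar := by
      rw [hEstar, hc]
      linear_combination (R_A * R_P / (R_A + R_P)) * (T / 2) * αPhigh * hquad
    rw [harg]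
  constructor
  · -- upper bound
    rintro x ⟨a, z, γ, δ, ⟨hameas, habd⟩, hγ1, hγ2, rfl⟩
    rw [hG]
    have hIa : IntervalIntegrable a volume 0 T := by
      refine intervalIntegrable_of_bdd hT.le hameas (M := aMax) fun s hs => ?_
      have h := habd s hs
      rw [abs_le]; exact ⟨by linarith [h.1], h.2⟩
    have hIka : IntervalIntegrable (fun s => k (a s)) volume 0 T := by
      refine intervalIntegrable_of_bdd hT.le (hkcont.measurable.comp hameas)
        (M := max |k 0| |k aMax|) fun s hs => ?_
      have h := habd s hs
      have h1 : k 0 ≤ k (a s) := hkmono.monotone h.1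
      have h2 : k (a s) ≤ k aMax := hkmono.monotone h.2
      rw [abs_le]
      constructor
      · calc -(max |k 0| |k aMax|) ≤ -|k 0| := neg_le_neg (le_max_left _ _)
          _ ≤ k 0 := neg_abs_le _
          _ ≤ k (a s) := h1
      · calc k (a s) ≤ k aMax := h2
          _ ≤ |k aMax| := le_abs_self _
          _ ≤ max |k 0| |k aMax| := le_max_right _ _
    have hint : T * (k astar - astar)
        ≤ (∫ s in (0:ℝ)..T, k (a s)) - ∫ s in (0:ℝ)..T, a s := by
      have h1 : (∫ _ in (0:ℝ)..T, (k astar - astar))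
          ≤ ∫ s in (0:ℝ)..T, (k (a s) - a s) := by
        refine intervalIntegral.integral_mono_on hT.le intervalIntegrable_const
          (hIka.sub hIa) fun s hs => hastar_min (a s) (habd s hs)
      rw [intervalIntegral.integral_const, intervalIntegral.integral_sub hIka hIa,
        smul_eq_mul, sub_zero] at h1
      exact h1
    simp only [Fobj]
    set Ia := ∫ s in (0:ℝ)..T, a s with hIa'
    set Ik := ∫ s in (0:ℝ)..T, k (a s) with hIk'
    refine le_trans (F_le_D hRA hRP hρ _ _) (neg_le_neg ?_)
    refine mul_le_mul_of_nonneg_left (Real.exp_le_exp.2 ?_) (Dconst_pos hRA hRP hρ).le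
    have hkey : R_A / (R_A + R_P) * (R_P * (δ - (1 - z) * Ia
          + (R_P * (1 - z) ^ 2 / 2 + γ / 2) * αPhigh * T))
        + R_P / (R_A + R_P) * (R_A * (Ik - z * Ia - δ
          + (R_A * z ^ 2 / 2 - γ / 2) * αAhigh * T))
        = c * (Ik - Ia + γ / 2 * T * (αPhigh - αAhigh)
          + T / 2 * (αPhigh * R_P * (1 - z) ^ 2 + αAhigh * R_A * z ^ 2)) := by
      rw [hc]; field_simp; ring
    rw [hkey]
    refine mul_le_mul_of_nonneg_left ?_ hcpos.le
    have hqz : R_A * R_P / (R_A + R_P) ≤ R_P * (1 - z) ^ 2 + R_A * z ^ 2 := by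
      rw [div_le_iff₀ hS]
      nlinarith [sq_nonneg ((R_A + R_P) * z - R_P)]
    have t1 : 0 ≤ T / 2 * (αAhigh - αPhigh) * (R_A * z ^ 2 - γ) := by
      apply mul_nonneg (mul_nonneg (by linarith) (by linarith)) (by linarith)
    have t2 : 0 ≤ T / 2 * αPhigh * (R_P * (1 - z) ^ 2 + R_A * z ^ 2 - c) := by
      apply mul_nonneg (mul_nonneg (by linarith) hαP.le) (by rw [hc]; linarith)
    rw [hEstar]
    have hid : Ik - Ia + γ / 2 * T * (αPhigh - αAhigh)
        + T / 2 * (αPhigh * R_P * (1 - z) ^ 2 + αAhigh * R_A * z ^ 2)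
        - (T * (k astar - astar) + T / 2 * (αPhigh * c))
        = (Ik - Ia - T * (k astar - astar))
          + T / 2 * (αAhigh - αPhigh) * (R_A * z ^ 2 - γ)
          + T / 2 * αPhigh * (R_P * (1 - z) ^ 2 + R_A * z ^ 2 - c) := by ring
    linarith [hint, t1, t2, hid]
  · -- least upper bound
    intro b hb
    rw [hG]
    set zs := R_P / (R_A + R_P) with hzs
    have hzspos : 0 < zs := by positivity
    have hzsbar : 0 < 1 - zs := by rw [hzs]; rw [sub_pos, div_lt_one hS]; linarith
    set t₀ := R_A * zs ^ 2 + R_P * (1 - zs) ^ 2 with ht₀def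
    have ht₀ : 0 < t₀ := by positivity
    set κ := c * (T / 2) * (αAhigh - αPhigh) with hκ
    have hmem : ∀ t ∈ Set.Ioo (0:ℝ) t₀,
        -(Dconst R_A R_P ρ * Real.exp (c * Estar + κ * t)) ∈
          {x : ℝ | ∃ a z γ δ, IsAction T aMax a ∧
            -(R_P * (1 - z) ^ 2) < γ ∧ γ < R_A * z ^ 2 ∧
            x = Fobj R_A R_P ρ T k a z γ δ αPhigh αAhigh} := by
      intro t ht
      set γt := R_A * zs ^ 2 - t with hγt
      set A := -(1 - zs) * (T * astar)
          + (R_P * (1 - zs) ^ 2 / 2 + γt / 2) * αPhigh * T with hA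
      set B := T * k astar - zs * (T * astar)
          + (R_A * zs ^ 2 / 2 - γt / 2) * αAhigh * T with hB
      set δt := (Real.log (ρ * R_A / R_P) - R_P * A + R_A * B) / (R_A + R_P) with hδt
      refine ⟨fun _ => astar, zs, γt, δt,
        ⟨measurable_const, fun s _ => hastar_mem⟩, by rw [hγt]; linarith [ht.2],
        by rw [hγt]; linarith [ht.1], ?_⟩
      have hF : Fobj R_A R_P ρ T k (fun _ => astar) zs γt δt αPhigh αAhigh
          = -(Dconst R_A R_P ρ * Real.exp (c * (A + B))) := by
        simp only [Fobj]
        simp only [intervalIntegral.integral_const, smul_eq_mul, sub_zero]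
        rw [show R_P * (δt - (1 - zs) * (T * astar)
            + (R_P * (1 - zs) ^ 2 / 2 + γt / 2) * αPhigh * T) = R_P * (δt + A) by
          rw [hA]; ring]
        rw [show R_A * (T * k astar - zs * (T * astar) - δt
            + (R_A * zs ^ 2 / 2 - γt / 2) * αAhigh * T) = R_A * (B - δt) by
          rw [hB]; ring]
        rw [hδt, hc]
        exact F_attain hRA hRP hρ A B
      rw [hF]
      have hAB : c * (A + B) = c * Estar + κ * t := by
        rw [hA, hB, hγt, hκ, hEstar, hc, hzs]
        linear_combination (R_A * R_P / (R_A + R_P)) * (T / 2) * αPhigh * hquad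
      rw [hAB]
    have htend : Filter.Tendsto
        (fun t : ℝ => -(Dconst R_A R_P ρ * Real.exp (c * Estar + κ * t)))
        (nhdsWithin 0 (Set.Ioi 0)) (nhds (-(Dconst R_A R_P ρ * Real.exp (c * Estar)))) := by
      have hcont : Continuous
          (fun t : ℝ => -(Dconst R_A R_P ρ * Real.exp (c * Estar + κ * t))) := by
        continuity
      have := (hcont.tendsto 0).mono_left (nhdsWithin_le_nhds (s := Set.Ioi (0:ℝ)))
      simpa using this
    have hev : ∀ᶠ t in nhdsWithin (0:ℝ) (Set.Ioi 0),
        -(Dconst R_A R_P ρ * Real.exp (c * Estar + κ * t)) ≤ b := by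
      filter_upwards [Ioo_mem_nhdsGT_of_mem (Set.mem_Ico.2 ⟨le_refl 0, ht₀⟩)] with t ht
      exact hb (hmem t ht)
    exact le_of_tendsto htend hev
end

section
/- (Deterministic form of Lemma 3.3(iii)c) Suppose α_P^high > α_A^high > 0. Then the supremum of F(a,z,γ,δ,α_P^high,α_A^high) over all deterministic actions a, all z ∈ ℝ, all δ ∈ ℝ, and all γ with -R_P(1-z)² < γ < R_A z², equals G(a*, z*, α_A^high). -/
open MeasureTheory

open Real

lemma aux_prod_eq (R_A R_P ρ : ℝ) (hRA : 0 < R_A) (hRP : 0 < R_P) (hρ : 0 < ρ) (x y : ℝ) :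
    (Real.exp x / (R_A / (R_A + R_P))) ^ (R_A / (R_A + R_P))
      * (ρ * Real.exp y / (R_P / (R_A + R_P))) ^ (R_P / (R_A + R_P))
    = ρ ^ (R_P / (R_A + R_P)) * ((R_A + R_P) / R_P) * (R_A / R_P) ^ (-(R_A / (R_A + R_P)))
      * Real.exp (R_A / (R_A + R_P) * x + R_P / (R_A + R_P) * y) := by
  have hp : 0 < R_A + R_P := by linarith
  have hlam : 0 < R_A / (R_A + R_P) := div_pos hRA hp
  have hmu : 0 < R_P / (R_A + R_P) := div_pos hRP hp
  rw [Real.rpow_def_of_pos (div_pos (exp_pos x) hlam),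
      Real.rpow_def_of_pos (div_pos (mul_pos hρ (exp_pos y)) hmu),
      Real.rpow_def_of_pos hρ, Real.rpow_def_of_pos (div_pos hRA hRP),
      Real.log_div (exp_ne_zero x) hlam.ne',
      Real.log_div (mul_pos hρ (exp_pos y)).ne' hmu.ne',
      Real.log_mul hρ.ne' (exp_ne_zero y), Real.log_exp, Real.log_exp,
      Real.log_div hRA.ne' hp.ne', Real.log_div hRP.ne' hp.ne',
      Real.log_div hRA.ne' hRP.ne',
      ← Real.exp_log (show (0:ℝ) < (R_A + R_P)/R_P from div_pos hp hRP),
      Real.log_div hp.ne' hRP.ne',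
      ← Real.exp_add, ← Real.exp_add, ← Real.exp_add, ← Real.exp_add]
  congr 1
  field_simp
  ring

lemma aux_sum_ge (R_A R_P ρ : ℝ) (hRA : 0 < R_A) (hRP : 0 < R_P) (hρ : 0 < ρ) (x y : ℝ) :
    ρ ^ (R_P / (R_A + R_P)) * ((R_A + R_P) / R_P) * (R_A / R_P) ^ (-(R_A / (R_A + R_P)))
      * Real.exp (R_A / (R_A + R_P) * x + R_P / (R_A + R_P) * y)
    ≤ Real.exp x + ρ * Real.exp y := by
  have hp : 0 < R_A + R_P := by linarith
  have hlam : 0 < R_A / (R_A + R_P) := div_pos hRA hp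
  have hmu : 0 < R_P / (R_A + R_P) := div_pos hRP hp
  have hsum : R_A / (R_A + R_P) + R_P / (R_A + R_P) = 1 := by field_simp
  have key := Real.geom_mean_le_arith_mean2_weighted hlam.le hmu.le
    (div_nonneg (exp_pos x).le hlam.le)
    (div_nonneg (mul_pos hρ (exp_pos y)).le hmu.le) hsum
  rw [aux_prod_eq R_A R_P ρ hRA hRP hρ x y] at key
  rwa [mul_div_cancel₀ _ hlam.ne', mul_div_cancel₀ _ hmu.ne'] at key

lemma aux_sum_eq (R_A R_P ρ : ℝ) (hRA : 0 < R_A) (hRP : 0 < R_P) (hρ : 0 < ρ) (x y : ℝ)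
    (hxy : Real.exp x * R_P = ρ * Real.exp y * R_A) :
    Real.exp x + ρ * Real.exp y
    = ρ ^ (R_P / (R_A + R_P)) * ((R_A + R_P) / R_P) * (R_A / R_P) ^ (-(R_A / (R_A + R_P)))
      * Real.exp (R_A / (R_A + R_P) * x + R_P / (R_A + R_P) * y) := by
  have hp : 0 < R_A + R_P := by linarith
  have hlam : 0 < R_A / (R_A + R_P) := div_pos hRA hp
  have hmu : 0 < R_P / (R_A + R_P) := div_pos hRP hp
  set w := Real.exp x / (R_A / (R_A + R_P)) with hw
  have hwpos : 0 < w := div_pos (exp_pos x) hlam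
  have hveq : ρ * Real.exp y / (R_P / (R_A + R_P)) = w := by
    rw [hw]
    field_simp
    nlinarith [hxy]
  have h1 : Real.exp x + ρ * Real.exp y = w := by
    have e1 : Real.exp x = R_A / (R_A + R_P) * w := by rw [hw]; field_simp
    have e2 : ρ * Real.exp y = R_P / (R_A + R_P) * w := by
      rw [← hveq]; field_simp
    rw [e1, e2]
    have : R_A / (R_A + R_P) + R_P / (R_A + R_P) = 1 := by field_simp
    nlinarith [this]
  have h2 : w = (Real.exp x / (R_A / (R_A + R_P))) ^ (R_A / (R_A + R_P))
      * (ρ * Real.exp y / (R_P / (R_A + R_P))) ^ (R_P / (R_A + R_P)) := by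
    rw [hveq, ← hw, ← Real.rpow_add hwpos,
      show R_A / (R_A + R_P) + R_P / (R_A + R_P) = 1 by field_simp, Real.rpow_one]
  rw [h1, h2]
  exact aux_prod_eq R_A R_P ρ hRA hRP hρ x y

lemma aux_F_le (R_A R_P ρ : ℝ) (hRA : 0 < R_A) (hRP : 0 < R_P) (hρ : 0 < ρ)
    (δ cP cA E : ℝ) (hE : E ≤ cP + cA) :
    -(Real.exp (R_P * (δ + cP)) + ρ * Real.exp (R_A * (cA - δ)))
    ≤ -(ρ ^ (R_P / (R_A + R_P)) * ((R_A + R_P) / R_P) * (R_A / R_P) ^ (-(R_A / (R_A + R_P)))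
        * Real.exp (R_A * R_P / (R_A + R_P) * E)) := by
  have hp : 0 < R_A + R_P := by linarith
  have hc : 0 ≤ R_A * R_P / (R_A + R_P) := by positivity
  have hCpos : 0 < ρ ^ (R_P / (R_A + R_P)) * ((R_A + R_P) / R_P)
      * (R_A / R_P) ^ (-(R_A / (R_A + R_P))) := by
    have h1 := Real.rpow_pos_of_pos hρ (R_P / (R_A + R_P))
    have h2 := Real.rpow_pos_of_pos (div_pos hRA hRP) (-(R_A / (R_A + R_P)))
    have h3 : 0 < (R_A + R_P) / R_P := div_pos hp hRP
    positivity
  have harg : R_A / (R_A + R_P) * (R_P * (δ + cP)) + R_P / (R_A + R_P) * (R_A * (cA - δ))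
      = R_A * R_P / (R_A + R_P) * (cP + cA) := by field_simp; ring
  have hge := aux_sum_ge R_A R_P ρ hRA hRP hρ (R_P * (δ + cP)) (R_A * (cA - δ))
  rw [harg] at hge
  have hmono : ρ ^ (R_P / (R_A + R_P)) * ((R_A + R_P) / R_P)
        * (R_A / R_P) ^ (-(R_A / (R_A + R_P))) * Real.exp (R_A * R_P / (R_A + R_P) * E)
      ≤ ρ ^ (R_P / (R_A + R_P)) * ((R_A + R_P) / R_P)
        * (R_A / R_P) ^ (-(R_A / (R_A + R_P)))
        * Real.exp (R_A * R_P / (R_A + R_P) * (cP + cA)) :=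
    mul_le_mul_of_nonneg_left
      (Real.exp_le_exp.2 (mul_le_mul_of_nonneg_left hE hc)) hCpos.le
  linarith


lemma aux_arg (R_A R_P : ℝ) (hp : R_A + R_P ≠ 0) (δ cP cA : ℝ) :
    R_A / (R_A + R_P) * (R_P * (δ + cP)) + R_P / (R_A + R_P) * (R_A * (cA - δ))
      = R_A * R_P / (R_A + R_P) * (cP + cA) := by field_simp; ring

lemma aux_opt (R_A R_P ρ : ℝ) (hRA : 0 < R_A) (hRP : 0 < R_P) (hρ : 0 < ρ) (cP cA : ℝ) :
    -Real.exp (R_P * ((Real.log ρ + Real.log R_A - Real.log R_P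
          + R_A * cA - R_P * cP) / (R_A + R_P) + cP))
      - ρ * Real.exp (R_A * (cA - (Real.log ρ + Real.log R_A - Real.log R_P
          + R_A * cA - R_P * cP) / (R_A + R_P)))
    = -(ρ ^ (R_P / (R_A + R_P)) * ((R_A + R_P) / R_P) * (R_A / R_P) ^ (-(R_A / (R_A + R_P)))
        * Real.exp (R_A * R_P / (R_A + R_P) * (cP + cA))) := by
  have hp : 0 < R_A + R_P := by linarith
  set δt : ℝ := (Real.log ρ + Real.log R_A - Real.log R_P
      + R_A * cA - R_P * cP) / (R_A + R_P) with hδt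
  have hlin : R_P * (δt + cP) + Real.log R_P
      = Real.log ρ + Real.log R_A + R_A * (cA - δt) := by
    rw [hδt]; field_simp; ring
  have hxy : Real.exp (R_P * (δt + cP)) * R_P
      = ρ * Real.exp (R_A * (cA - δt)) * R_A := by
    have e1 : Real.exp (R_P * (δt + cP)) * R_P
        = Real.exp (R_P * (δt + cP) + Real.log R_P) := by
      rw [Real.exp_add, Real.exp_log hRP]
    rw [e1, hlin, Real.exp_add, Real.exp_add, Real.exp_log hρ, Real.exp_log hRA]
    ring
  have h := aux_sum_eq R_A R_P ρ hRA hRP hρ (R_P * (δt + cP)) (R_A * (cA - δt)) hxy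
  rw [aux_arg R_A R_P hp.ne' δt cP cA] at h
  linarith [h]

lemma action_bdd_integrable {T aMax : ℝ} (hT : 0 < T) {f : ℝ → ℝ} (hf : Measurable f)
    {a : ℝ → ℝ} (ha : IsAction T aMax a)
    (hbd : ∀ x ∈ Set.Icc (0:ℝ) aMax, |f x| ≤ (|f 0| ⊔ |f aMax|)) :
    IntervalIntegrable (fun s => f (a s)) volume 0 T := by
  apply IntervalIntegrable.mono_fun' (g := fun _ => (|f 0| ⊔ |f aMax|))
    intervalIntegrable_const ((hf.comp ha.1).aestronglyMeasurable)
  rw [Set.uIoc_of_le hT.le]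
  filter_upwards [ae_restrict_mem measurableSet_Ioc] with s hs
  exact hbd _ (ha.2 s ⟨hs.1.le, hs.2⟩)

lemma action_integrable {T aMax : ℝ} (hT : 0 < T) (haMax : 0 < aMax)
    {a : ℝ → ℝ} (ha : IsAction T aMax a) : IntervalIntegrable a volume 0 T := by
  have := action_bdd_integrable hT measurable_id ha (f := id) ?_
  · simpa using this
  · intro x hx
    simp only [id]
    rw [abs_of_nonneg hx.1]
    refine le_trans ?_ (le_max_right _ _)
    rw [abs_of_nonneg haMax.le]; exact hx.2

lemma action_comp_integrable {T aMax : ℝ} (hT : 0 < T)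
    {a : ℝ → ℝ} (ha : IsAction T aMax a)
    {k : ℝ → ℝ} (hk : Continuous k) (hkmono : StrictMono k) :
    IntervalIntegrable (fun s => k (a s)) volume 0 T := by
  apply action_bdd_integrable hT hk.measurable ha
  intro x hx
  rw [abs_le]
  constructor
  · calc -(|k 0| ⊔ |k aMax|) ≤ -|k 0| := by simp [neg_le_neg, le_max_left]
      _ ≤ k 0 := neg_abs_le _
      _ ≤ k x := hkmono.le_iff_le.mpr hx.1
  · calc k x ≤ k aMax := hkmono.le_iff_le.mpr hx.2
      _ ≤ |k aMax| := le_abs_self _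
      _ ≤ _ := le_max_right _ _

set_option maxHeartbeats 1000000 in
/-- Lemma 3.3(iii)c: if `α_P^high > α_A^high`, the supremum of `F` over deterministic
actions, `z`, `δ` and `-R_P(1-z)² < γ < R_A z²` equals `G(a*, z*, α_A^high)`. -/
theorem sup_Q_mid_high (R_A R_P ρ T aMax : ℝ) (k : ℝ → ℝ)
    (hRA : 0 < R_A) (hRP : 0 < R_P) (hρ : 0 < ρ) (hT : 0 < T) (haMax : 0 < aMax)
    (hkcont : Continuous k) (hkconv : StrictConvexOn ℝ Set.univ k) (hkmono : StrictMono k)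
    (astar : ℝ) (hastar_mem : astar ∈ Set.Icc (0 : ℝ) aMax)
    (hastar_min : ∀ x ∈ Set.Icc (0 : ℝ) aMax, k astar - astar ≤ k x - x)
    (αPhigh αAhigh : ℝ) (hαA : 0 < αAhigh) (hlt : αAhigh < αPhigh) :
    IsLUB {x : ℝ | ∃ a z γ δ, IsAction T aMax a ∧
        -(R_P * (1 - z) ^ 2) < γ ∧ γ < R_A * z ^ 2 ∧
        x = Fobj R_A R_P ρ T k a z γ δ αPhigh αAhigh}
      (Gobj R_A R_P ρ T k (fun _ => astar) (R_P / (R_A + R_P)) 0 αAhigh αAhigh) := by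
  have hp : 0 < R_A + R_P := by linarith
  set Estar : ℝ := T * (k astar - astar)
      + T / 2 * (αAhigh * (R_A * R_P / (R_A + R_P))) with hEstar
  have hVeq : Gobj R_A R_P ρ T k (fun _ => astar) (R_P / (R_A + R_P)) 0 αAhigh αAhigh
      = -(ρ ^ (R_P / (R_A + R_P)) * ((R_A + R_P) / R_P)
          * (R_A / R_P) ^ (-(R_A / (R_A + R_P)))
          * Real.exp (R_A * R_P / (R_A + R_P) * Estar)) := by
    unfold Gobj
    simp only [intervalIntegral.integral_const, smul_eq_mul, sub_zero]
    congr 3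
    rw [hEstar]
    field_simp
    ring
  constructor
  · -- upper bound
    rintro x ⟨a, z, γ, δ, ha, hγ1, hγ2, rfl⟩
    rw [hVeq]
    have ha_int := action_integrable hT haMax ha
    have hka_int := action_comp_integrable hT ha hkcont hkmono
    set A : ℝ := ∫ s in (0:ℝ)..T, a s with hA
    set K : ℝ := ∫ s in (0:ℝ)..T, k (a s) with hK
    have hKA : T * (k astar - astar) ≤ K - A := by
      have hsub : (∫ s in (0:ℝ)..T, (k (a s) - a s)) = K - A :=
        intervalIntegral.integral_sub hka_int ha_int
      have hmono : (∫ s in (0:ℝ)..T, (k astar - astar))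
          ≤ ∫ s in (0:ℝ)..T, (k (a s) - a s) :=
        intervalIntegral.integral_mono_on hT.le intervalIntegrable_const
          (hka_int.sub ha_int) (fun s hs => hastar_min _ (ha.2 s hs))
      rw [intervalIntegral.integral_const, smul_eq_mul, sub_zero] at hmono
      linarith [hsub ▸ hmono]
    have hF : Fobj R_A R_P ρ T k a z γ δ αPhigh αAhigh
        = -(Real.exp (R_P * (δ + (-((1 - z) * A)
              + (R_P * (1 - z) ^ 2 / 2 + γ / 2) * αPhigh * T)))
          + ρ * Real.exp (R_A * ((K - z * A
              + (R_A * z ^ 2 / 2 - γ / 2) * αAhigh * T) - δ))) := by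
      unfold Fobj
      rw [show δ - (1 - z) * A + (R_P * (1 - z) ^ 2 / 2 + γ / 2) * αPhigh * T
            = δ + (-((1 - z) * A) + (R_P * (1 - z) ^ 2 / 2 + γ / 2) * αPhigh * T) by ring,
          show K - z * A - δ + (R_A * z ^ 2 / 2 - γ / 2) * αAhigh * T
            = (K - z * A + (R_A * z ^ 2 / 2 - γ / 2) * αAhigh * T) - δ by ring]
      ring
    rw [hF]
    apply aux_F_le R_A R_P ρ hRA hRP hρ
    -- exponent inequality
    have hq : R_A * R_P / (R_A + R_P) ≤ R_P * (1 - z) ^ 2 + R_A * z ^ 2 := by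
      rw [div_le_iff₀ hp]
      nlinarith [sq_nonneg ((R_A + R_P) * z - R_P)]
    have h1 : 0 ≤ (γ + R_P * (1 - z) ^ 2) * ((αPhigh - αAhigh) * (T / 2)) :=
      mul_nonneg (by linarith) (mul_nonneg (by linarith) (by linarith))
    have h2 : 0 ≤ (R_P * (1 - z) ^ 2 + R_A * z ^ 2 - R_A * R_P / (R_A + R_P))
        * (αAhigh * (T / 2)) :=
      mul_nonneg (by linarith) (mul_nonneg hαA.le (by linarith))
    rw [hEstar]
    nlinarith [hKA, h1, h2]
  · -- least upper bound
    rintro b hb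
    rw [hVeq]
    have ht0 : (0:ℝ) < R_P * (1 - R_P / (R_A + R_P)) ^ 2 + R_A * (R_P / (R_A + R_P)) ^ 2 := by
      have h1 : (0:ℝ) < R_A * (R_P / (R_A + R_P)) ^ 2 :=
        mul_pos hRA (pow_pos (div_pos hRP hp) 2)
      nlinarith [sq_nonneg (1 - R_P / (R_A + R_P))]
    set g : ℝ → ℝ := fun t => -(ρ ^ (R_P / (R_A + R_P)) * ((R_A + R_P) / R_P)
        * (R_A / R_P) ^ (-(R_A / (R_A + R_P)))
        * Real.exp (R_A * R_P / (R_A + R_P)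
            * (Estar + t * (T * (αPhigh - αAhigh) / 2)))) with hg
    have hg0 : g 0 = -(ρ ^ (R_P / (R_A + R_P)) * ((R_A + R_P) / R_P)
        * (R_A / R_P) ^ (-(R_A / (R_A + R_P)))
        * Real.exp (R_A * R_P / (R_A + R_P) * Estar)) := by
      rw [hg]; norm_num
    have hgcont : Continuous g := by
      rw [hg]; fun_prop
    have htend : Filter.Tendsto g (nhdsWithin 0 (Set.Ioi 0)) (nhds (g 0)) :=
      (hgcont.tendsto 0).mono_left nhdsWithin_le_nhds
    rw [← hg0]
    refine le_of_tendsto htend ?_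
    refine Filter.eventually_of_mem
      (Ioo_mem_nhdsGT_of_mem ⟨le_refl (0:ℝ), ht0⟩) (fun t ht => ?_)
    -- for t ∈ (0, t0), build a feasible point with value g t
    set zs : ℝ := R_P / (R_A + R_P) with hzs
    set γt : ℝ := -(R_P * (1 - zs) ^ 2) + t with hγt
    set cPt : ℝ := -((1 - zs) * (T * astar))
        + (R_P * (1 - zs) ^ 2 / 2 + γt / 2) * αPhigh * T with hcPt
    set cAt : ℝ := T * k astar - zs * (T * astar)
        + (R_A * zs ^ 2 / 2 - γt / 2) * αAhigh * T with hcAt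
    set δt : ℝ := (Real.log ρ + Real.log R_A - Real.log R_P
        + R_A * cAt - R_P * cPt) / (R_A + R_P) with hδt
    have hact : IsAction T aMax (fun _ => astar) :=
      ⟨measurable_const, fun s _ => hastar_mem⟩
    have hγ1 : -(R_P * (1 - zs) ^ 2) < γt := by rw [hγt]; linarith [ht.1]
    have hγ2 : γt < R_A * zs ^ 2 := by rw [hγt]; linarith [ht.2]
    have hsum : cPt + cAt = Estar + t * (T * (αPhigh - αAhigh) / 2) := by
      rw [hcPt, hcAt, hγt, hEstar, hzs]; field_simp; ring
    have hFval : Fobj R_A R_P ρ T k (fun _ => astar) zs γt δt αPhigh αAhigh = g t := by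
      have hint1 : (∫ s in (0:ℝ)..T, (fun _ => astar) s) = T * astar := by simp
      have hint2 : (∫ s in (0:ℝ)..T, k ((fun _ => astar) s)) = T * k astar := by simp
      unfold Fobj
      rw [hint1, hint2,
        show δt - (1 - zs) * (T * astar)
            + (R_P * (1 - zs) ^ 2 / 2 + γt / 2) * αPhigh * T = δt + cPt from by
          rw [hcPt]; ring,
        show T * k astar - zs * (T * astar) - δt
            + (R_A * zs ^ 2 / 2 - γt / 2) * αAhigh * T = cAt - δt from by
          rw [hcAt]; ring]
      simp only [hg]
      rw [← hsum, hδt]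
      exact aux_opt R_A R_P ρ hRA hRP hρ cPt cAt
    rw [← hFval]
    exact hb ⟨fun _ => astar, zs, γt, δt, hact, hγ1, hγ2, rfl⟩
end

section
/- (Deterministic form of Lemma 3.3(iv)) Let α_P^high > 0. For every α_A > 0, the supremum of F(a, z, R_A z², δ, α_P^high, α_A) over all deterministic actions a, z ∈ ℝ and δ ∈ ℝ equals G(a*, z*, α_P^high); in particular this supremum does not depend on α_A and it is attained at a = a*, z = z*. -/
open MeasureTheory

/-- Scalar optimization over `δ`: the map
`δ ↦ -exp (R_P (δ + A)) - ρ exp (R_A (B - δ))` has maximum value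
`-(ρ^{R_P/(R_A+R_P)} ((R_A+R_P)/R_P) (R_A/R_P)^{-R_A/(R_A+R_P)} exp(λ (A+B)))`. -/
private lemma key_val (R_A R_P ρ : ℝ) (hRA : 0 < R_A) (hRP : 0 < R_P) (hρ : 0 < ρ)
    (A B : ℝ) :
    (∃ δ : ℝ, -Real.exp (R_P * (δ + A)) - ρ * Real.exp (R_A * (B - δ))
        = -(ρ ^ (R_P / (R_A + R_P)) * ((R_A + R_P) / R_P)
            * (R_A / R_P) ^ (-(R_A / (R_A + R_P)))
            * Real.exp ((R_A * R_P / (R_A + R_P)) * (A + B)))) ∧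
    (∀ δ : ℝ, -Real.exp (R_P * (δ + A)) - ρ * Real.exp (R_A * (B - δ))
        ≤ -(ρ ^ (R_P / (R_A + R_P)) * ((R_A + R_P) / R_P)
            * (R_A / R_P) ^ (-(R_A / (R_A + R_P)))
            * Real.exp ((R_A * R_P / (R_A + R_P)) * (A + B)))) := by
  have hS : (0:ℝ) < R_A + R_P := by linarith
  have hr0 : (0:ℝ) < R_A / R_P := div_pos hRA hRP
  have hpr : (0:ℝ) < ρ * (R_A / R_P) := mul_pos hρ hr0
  set δ0 : ℝ := (Real.log (ρ * (R_A / R_P)) + R_A * B - R_P * A) / (R_A + R_P) with hδ0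
  have e1 : Real.exp (R_P * (δ0 + A))
      = (ρ * (R_A / R_P)) ^ (R_P / (R_A + R_P))
          * Real.exp ((R_A * R_P / (R_A + R_P)) * (A + B)) := by
    rw [Real.rpow_def_of_pos hpr, ← Real.exp_add]
    congr 1
    rw [hδ0]
    field_simp
    ring
  have h2 : ρ * ρ ^ (-(R_A / (R_A + R_P))) = ρ ^ (R_P / (R_A + R_P)) := by
    nth_rewrite 1 [← Real.rpow_one ρ]
    rw [← Real.rpow_add hρ]
    congr 1
    field_simp
    ring
  have e2 : ρ * Real.exp (R_A * (B - δ0))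
      = ρ ^ (R_P / (R_A + R_P)) * (R_A / R_P) ^ (-(R_A / (R_A + R_P)))
          * Real.exp ((R_A * R_P / (R_A + R_P)) * (A + B)) := by
    have h1 : R_A * (B - δ0)
        = Real.log (ρ * (R_A / R_P)) * (-(R_A / (R_A + R_P)))
            + (R_A * R_P / (R_A + R_P)) * (A + B) := by
      rw [hδ0]; field_simp; ring
    rw [h1, Real.exp_add, ← Real.rpow_def_of_pos hpr,
        Real.mul_rpow hρ.le hr0.le, ← h2]
    ring
  have hq' : (R_A / R_P) ^ (R_P / (R_A + R_P))
      = (R_A / R_P) ^ (-(R_A / (R_A + R_P))) * (R_A / R_P) := by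
    have h := Real.rpow_add hr0 (-(R_A / (R_A + R_P))) 1
    rw [Real.rpow_one] at h
    rw [← h]
    congr 1
    field_simp
    ring
  have hsplit : (ρ * (R_A / R_P)) ^ (R_P / (R_A + R_P))
      = ρ ^ (R_P / (R_A + R_P)) * (R_A / R_P) ^ (R_P / (R_A + R_P)) :=
    Real.mul_rpow hρ.le hr0.le
  have e4 : (ρ * (R_A / R_P)) ^ (R_P / (R_A + R_P))
        + ρ ^ (R_P / (R_A + R_P)) * (R_A / R_P) ^ (-(R_A / (R_A + R_P)))
      = ρ ^ (R_P / (R_A + R_P)) * ((R_A + R_P) / R_P)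
          * (R_A / R_P) ^ (-(R_A / (R_A + R_P))) := by
    rw [hsplit, hq']
    field_simp
  have e3 : R_P * ((ρ * (R_A / R_P)) ^ (R_P / (R_A + R_P)))
      = R_A * (ρ ^ (R_P / (R_A + R_P)) * (R_A / R_P) ^ (-(R_A / (R_A + R_P)))) := by
    rw [hsplit, hq']
    field_simp
  have veq : -Real.exp (R_P * (δ0 + A)) - ρ * Real.exp (R_A * (B - δ0))
      = -(ρ ^ (R_P / (R_A + R_P)) * ((R_A + R_P) / R_P)
          * (R_A / R_P) ^ (-(R_A / (R_A + R_P)))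
          * Real.exp ((R_A * R_P / (R_A + R_P)) * (A + B))) := by
    rw [e1, e2]
    linear_combination (-(Real.exp ((R_A * R_P / (R_A + R_P)) * (A + B)))) * e4
  refine ⟨⟨δ0, veq⟩, fun δ => ?_⟩
  have ea : Real.exp (R_P * (δ + A))
      = Real.exp (R_P * (δ0 + A)) * Real.exp (R_P * (δ - δ0)) := by
    rw [← Real.exp_add]; congr 1; ring
  have eb : Real.exp (R_A * (B - δ))
      = Real.exp (R_A * (B - δ0)) * Real.exp (R_A * (δ0 - δ)) := by
    rw [← Real.exp_add]; congr 1; ring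
  have hX := Real.exp_pos (R_P * (δ0 + A))
  have hY := Real.exp_pos (R_A * (B - δ0))
  have h1 := Real.add_one_le_exp (R_P * (δ - δ0))
  have h2' := Real.add_one_le_exp (R_A * (δ0 - δ))
  have crit : R_P * Real.exp (R_P * (δ0 + A))
      = R_A * (ρ * Real.exp (R_A * (B - δ0))) := by
    rw [e1, e2]
    linear_combination (Real.exp ((R_A * R_P / (R_A + R_P)) * (A + B))) * e3
  rw [← veq, ea, eb]
  have hp1 : 0 ≤ Real.exp (R_P * (δ0 + A))
      * (Real.exp (R_P * (δ - δ0)) - (R_P * (δ - δ0) + 1)) :=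
    mul_nonneg hX.le (by linarith)
  have hp2 : 0 ≤ (ρ * Real.exp (R_A * (B - δ0)))
      * (Real.exp (R_A * (δ0 - δ)) - (R_A * (δ0 - δ) + 1)) :=
    mul_nonneg (by positivity) (by linarith)
  have hc2 : (δ - δ0) * (R_P * Real.exp (R_P * (δ0 + A)))
      = (δ - δ0) * (R_A * (ρ * Real.exp (R_A * (B - δ0)))) := by rw [crit]
  nlinarith [hp1, hp2, hc2]

/-- Rewriting `Fobj` with `γ = R_A z²` in the two-exponential normal form. -/
private lemma Fobj_eq (R_A R_P ρ T : ℝ) (k a : ℝ → ℝ) (z δ αP αA : ℝ) :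
    Fobj R_A R_P ρ T k a z (R_A * z ^ 2) δ αP αA
      = -Real.exp (R_P * (δ + (-((1 - z) * (∫ s in (0:ℝ)..T, a s))
            + (R_P * (1 - z) ^ 2 / 2 + R_A * z ^ 2 / 2) * αP * T)))
        - ρ * Real.exp (R_A * (((∫ s in (0:ℝ)..T, k (a s))
            - z * (∫ s in (0:ℝ)..T, a s)) - δ)) := by
  simp only [Fobj]
  ring_nf

/-- `Fobj` at the constant action, in the two-exponential normal form. -/
private lemma Fobj_const_eq (R_A R_P ρ T : ℝ) (k : ℝ → ℝ) (astar δ αP αA : ℝ) :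
    Fobj R_A R_P ρ T k (fun _ => astar) (R_P / (R_A + R_P))
        (R_A * (R_P / (R_A + R_P)) ^ 2) δ αP αA
      = -Real.exp (R_P * (δ + (-((1 - R_P / (R_A + R_P)) * (T * astar))
            + (R_P * (1 - R_P / (R_A + R_P)) ^ 2 / 2
                + R_A * (R_P / (R_A + R_P)) ^ 2 / 2) * αP * T)))
        - ρ * Real.exp (R_A * ((T * k astar
            - R_P / (R_A + R_P) * (T * astar)) - δ)) := by
  simp only [Fobj, intervalIntegral.integral_const, smul_eq_mul, sub_zero]
  ring_nf

/-- Unfolding `Gobj` at the constant action and `z = z*`, `γ = 0`, `α_P = α_A`. -/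
private lemma Gobj_eq (R_A R_P ρ T : ℝ) (k : ℝ → ℝ) (astar αP : ℝ) :
    Gobj R_A R_P ρ T k (fun _ => astar) (R_P / (R_A + R_P)) 0 αP αP
      = -(ρ ^ (R_P / (R_A + R_P)) * ((R_A + R_P) / R_P)
          * (R_A / R_P) ^ (-(R_A / (R_A + R_P)))
          * Real.exp ((R_A * R_P / (R_A + R_P))
              * ((-((1 - R_P / (R_A + R_P)) * (T * astar))
                  + (R_P * (1 - R_P / (R_A + R_P)) ^ 2 / 2
                      + R_A * (R_P / (R_A + R_P)) ^ 2 / 2) * αP * T)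
                + (T * k astar - R_P / (R_A + R_P) * (T * astar))))) := by
  simp only [Gobj, intervalIntegral.integral_const, smul_eq_mul, sub_zero]
  ring_nf

/-- Lemma 3.3(iv): for any `α_A > 0`, the supremum of `F(a,z,R_A z²,δ,α_P^high,α_A)`
over deterministic actions, `z` and `δ`, equals `G(a*,z*,α_P^high)`; in particular it
does not depend on `α_A`, and it is attained at `a = a*`, `z = z*`. -/
theorem sup_Q_up (R_A R_P ρ T aMax : ℝ) (k : ℝ → ℝ)
    (hRA : 0 < R_A) (hRP : 0 < R_P) (hρ : 0 < ρ) (hT : 0 < T) (haMax : 0 < aMax)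
    (hkcont : Continuous k) (hkconv : StrictConvexOn ℝ Set.univ k) (hkmono : StrictMono k)
    (astar : ℝ) (hastar_mem : astar ∈ Set.Icc (0 : ℝ) aMax)
    (hastar_min : ∀ x ∈ Set.Icc (0 : ℝ) aMax, k astar - astar ≤ k x - x)
    (αPhigh : ℝ) (hαP : 0 < αPhigh) (αA : ℝ) (hαA : 0 < αA) :
    IsGreatest {x : ℝ | ∃ a z δ, IsAction T aMax a ∧
        x = Fobj R_A R_P ρ T k a z (R_A * z ^ 2) δ αPhigh αA}
      (Gobj R_A R_P ρ T k (fun _ => astar) (R_P / (R_A + R_P)) 0 αPhigh αPhigh) ∧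
    (∃ δ : ℝ, Fobj R_A R_P ρ T k (fun _ => astar) (R_P / (R_A + R_P))
        (R_A * (R_P / (R_A + R_P)) ^ 2) δ αPhigh αA
      = Gobj R_A R_P ρ T k (fun _ => astar) (R_P / (R_A + R_P)) 0 αPhigh αPhigh) := by
  have hS : (0:ℝ) < R_A + R_P := by linarith
  -- the "starred" exponents
  obtain ⟨⟨δ0, hδ0⟩, _⟩ := key_val R_A R_P ρ hRA hRP hρ
    (-((1 - R_P / (R_A + R_P)) * (T * astar))
        + (R_P * (1 - R_P / (R_A + R_P)) ^ 2 / 2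
            + R_A * (R_P / (R_A + R_P)) ^ 2 / 2) * αPhigh * T)
    (T * k astar - R_P / (R_A + R_P) * (T * astar))
  have hFG : Fobj R_A R_P ρ T k (fun _ => astar) (R_P / (R_A + R_P))
        (R_A * (R_P / (R_A + R_P)) ^ 2) δ0 αPhigh αA
      = Gobj R_A R_P ρ T k (fun _ => astar) (R_P / (R_A + R_P)) 0 αPhigh αPhigh := by
    rw [Fobj_const_eq, Gobj_eq]
    exact hδ0
  refine ⟨⟨⟨fun _ => astar, R_P / (R_A + R_P), δ0,
      ⟨measurable_const, fun s _ => hastar_mem⟩, hFG.symm⟩, ?_⟩, ⟨δ0, hFG⟩⟩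
  -- upper bound
  rintro x ⟨a, z, δ, ⟨hameas, hamem⟩, rfl⟩
  -- integrability
  have hbnd : ∀ (f : ℝ → ℝ) (M : ℝ), Measurable f →
      (∀ s ∈ Set.Icc (0:ℝ) T, ‖f s‖ ≤ M) → IntervalIntegrable f volume 0 T := by
    intro f M hm hb
    rw [intervalIntegrable_iff_integrableOn_Ioc_of_le hT.le]
    apply Measure.integrableOn_of_bounded (M := M) measure_Ioc_lt_top.ne
      hm.aestronglyMeasurable
    filter_upwards [ae_restrict_mem measurableSet_Ioc] with s hs
    exact hb s (Set.Ioc_subset_Icc_self hs)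
  have hIa : IntervalIntegrable a volume 0 T := by
    refine hbnd a aMax hameas fun s hs => ?_
    have h := hamem s hs
    rw [Real.norm_eq_abs, abs_le]
    exact ⟨by linarith [h.1], h.2⟩
  have hIk : IntervalIntegrable (fun s => k (a s)) volume 0 T := by
    refine hbnd _ (|k 0| + |k aMax|) (hkcont.measurable.comp hameas) fun s hs => ?_
    have h := hamem s hs
    have h1 : k (a s) ≤ k aMax := hkmono.monotone h.2
    have h2 : k 0 ≤ k (a s) := hkmono.monotone h.1
    rw [Real.norm_eq_abs, abs_le]
    constructor
    · have := neg_abs_le (k 0)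
      have := abs_nonneg (k aMax)
      linarith
    · have := le_abs_self (k aMax)
      have := abs_nonneg (k 0)
      linarith
  -- integral bound
  have hKI : T * (k astar - astar)
      ≤ (∫ s in (0:ℝ)..T, k (a s)) - ∫ s in (0:ℝ)..T, a s := by
    have h8 : (∫ s in (0:ℝ)..T, k (a s)) - (∫ s in (0:ℝ)..T, a s)
        = ∫ s in (0:ℝ)..T, (k (a s) - a s) :=
      (intervalIntegral.integral_sub hIk hIa).symm
    have h9 : (∫ _ in (0:ℝ)..T, (k astar - astar)) = T * (k astar - astar) := by
      rw [intervalIntegral.integral_const, smul_eq_mul, sub_zero]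
    have h10 : (∫ _ in (0:ℝ)..T, (k astar - astar))
        ≤ ∫ s in (0:ℝ)..T, (k (a s) - a s) :=
      intervalIntegral.integral_mono_on hT.le intervalIntegrable_const
        (hIk.sub hIa) fun s hs => hastar_min (a s) (hamem s hs)
    rw [h8, ← h9]
    exact h10
  -- z bound
  have hz : R_P * (1 - R_P / (R_A + R_P)) ^ 2 + R_A * (R_P / (R_A + R_P)) ^ 2
      ≤ R_P * (1 - z) ^ 2 + R_A * z ^ 2 := by
    have hid : R_P * (1 - z) ^ 2 + R_A * z ^ 2
        - (R_P * (1 - R_P / (R_A + R_P)) ^ 2 + R_A * (R_P / (R_A + R_P)) ^ 2)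
        = (R_A + R_P) * (z - R_P / (R_A + R_P)) ^ 2 := by
      field_simp
      ring
    nlinarith [mul_nonneg hS.le (sq_nonneg (z - R_P / (R_A + R_P)))]
  -- exponent comparison
  have hsum : (-((1 - R_P / (R_A + R_P)) * (T * astar))
        + (R_P * (1 - R_P / (R_A + R_P)) ^ 2 / 2
            + R_A * (R_P / (R_A + R_P)) ^ 2 / 2) * αPhigh * T)
        + (T * k astar - R_P / (R_A + R_P) * (T * astar))
      ≤ (-((1 - z) * (∫ s in (0:ℝ)..T, a s))
          + (R_P * (1 - z) ^ 2 / 2 + R_A * z ^ 2 / 2) * αPhigh * T)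
        + (((∫ s in (0:ℝ)..T, k (a s)) - z * (∫ s in (0:ℝ)..T, a s))) := by
    have hmul := mul_le_mul_of_nonneg_right hz
      (by positivity : (0:ℝ) ≤ αPhigh * T / 2)
    nlinarith [hKI, hmul]
  obtain ⟨_, hub⟩ := key_val R_A R_P ρ hRA hRP hρ
    (-((1 - z) * (∫ s in (0:ℝ)..T, a s))
        + (R_P * (1 - z) ^ 2 / 2 + R_A * z ^ 2 / 2) * αPhigh * T)
    (((∫ s in (0:ℝ)..T, k (a s)) - z * (∫ s in (0:ℝ)..T, a s)))
  have step1 := hub δ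
  rw [← Fobj_eq] at step1
  refine le_trans step1 ?_
  rw [Gobj_eq]
  have hc : (0:ℝ) ≤ ρ ^ (R_P / (R_A + R_P)) * ((R_A + R_P) / R_P)
      * (R_A / R_P) ^ (-(R_A / (R_A + R_P))) := by positivity
  have hlam : (0:ℝ) ≤ R_A * R_P / (R_A + R_P) := by positivity
  exact neg_le_neg (mul_le_mul_of_nonneg_left
    (Real.exp_le_exp.2 (mul_le_mul_of_nonneg_left hsum hlam)) hc)
end

section
/- (Deterministic form of Lemma 3.3(v)b) Suppose α_P^high > α_A^low > 0. Then the supremum of F(a,z,γ,δ,α_P^high,α_A^low) over all deterministic actions a, all z ∈ ℝ, all δ ∈ ℝ, and all γ with γ > R_A z², equals G(a*, z*, α_P^high). -/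
set_option maxHeartbeats 1000000

open MeasureTheory

lemma amgm_exp (R_A R_P ρ : ℝ) (hRA : 0 < R_A) (hRP : 0 < R_P) (hρ : 0 < ρ) (P Q : ℝ) :
    ρ ^ (R_P / (R_A + R_P)) * ((R_A + R_P) / R_P) * (R_A / R_P) ^ (-(R_A / (R_A + R_P)))
      * Real.exp (R_A / (R_A + R_P) * P + R_P / (R_A + R_P) * Q)
      ≤ Real.exp P + ρ * Real.exp Q := by
  have hs : 0 < R_A + R_P := by linarith
  set w₁ : ℝ := R_A / (R_A + R_P) with hw₁def
  set w₂ : ℝ := R_P / (R_A + R_P) with hw₂def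
  have h1 : 0 < w₁ := by positivity
  have h2 : 0 < w₂ := by positivity
  have hw : w₁ + w₂ = 1 := by rw [hw₁def, hw₂def, ← add_div, div_self hs.ne']
  have key := Real.geom_mean_le_arith_mean2_weighted h1.le h2.le
      (p₁ := Real.exp P / w₁) (p₂ := ρ * Real.exp Q / w₂) (by positivity) (by positivity) hw
  have hrhs : w₁ * (Real.exp P / w₁) + w₂ * (ρ * Real.exp Q / w₂) = Real.exp P + ρ * Real.exp Q := by
    field_simp
  rw [hrhs] at key
  refine le_trans (le_of_eq ?_) key
  rw [Real.rpow_def_of_pos hρ, Real.rpow_def_of_pos (by positivity : (0:ℝ) < R_A / R_P),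
      Real.rpow_def_of_pos (by positivity : (0:ℝ) < Real.exp P / w₁),
      Real.rpow_def_of_pos (by positivity : (0:ℝ) < ρ * Real.exp Q / w₂),
      show (R_A + R_P) / R_P = Real.exp (Real.log ((R_A + R_P) / R_P)) from
        (Real.exp_log (by positivity)).symm]
  rw [← Real.exp_add, ← Real.exp_add, ← Real.exp_add, ← Real.exp_add]
  congr 1
  rw [Real.log_div (Real.exp_ne_zero P) h1.ne', Real.log_exp,
      Real.log_div (by positivity) h2.ne', Real.log_mul hρ.ne' (Real.exp_ne_zero Q), Real.log_exp,
      Real.log_div hs.ne' hRP.ne', Real.log_div hRA.ne' hRP.ne',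
      hw₁def, hw₂def, Real.log_div hRA.ne' hs.ne', Real.log_div hRP.ne' hs.ne']
  field_simp
  ring

lemma attain_exp (R_A R_P ρ : ℝ) (hRA : 0 < R_A) (hRP : 0 < R_P) (hρ : 0 < ρ) (cP cA : ℝ) :
    ∃ δ : ℝ, Real.exp (R_P * (δ + cP)) + ρ * Real.exp (R_A * (cA - δ))
      = ρ ^ (R_P / (R_A + R_P)) * ((R_A + R_P) / R_P) * (R_A / R_P) ^ (-(R_A / (R_A + R_P)))
        * Real.exp (R_A * R_P / (R_A + R_P) * (cP + cA)) := by
  have hs : 0 < R_A + R_P := by linarith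
  set L : ℝ := Real.log (ρ * (R_A / R_P)) with hL
  refine ⟨(L + R_A * cA - R_P * cP) / (R_A + R_P), ?_⟩
  have e1 : R_P * ((L + R_A * cA - R_P * cP) / (R_A + R_P) + cP)
      = R_P / (R_A + R_P) * L + R_A * R_P / (R_A + R_P) * (cP + cA) := by
    field_simp; ring
  have e2 : R_A * (cA - (L + R_A * cA - R_P * cP) / (R_A + R_P))
      = -(R_A / (R_A + R_P)) * L + R_A * R_P / (R_A + R_P) * (cP + cA) := by
    field_simp; ring
  rw [e1, e2]
  have hLval : L = Real.log ρ + (Real.log R_A - Real.log R_P) := by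
    rw [hL, Real.log_mul hρ.ne' (by positivity), Real.log_div hRA.ne' hRP.ne']
  set K : ℝ := R_P / (R_A + R_P) * Real.log ρ - R_A / (R_A + R_P) * Real.log R_A
      + R_A / (R_A + R_P) * Real.log R_P + R_A * R_P / (R_A + R_P) * (cP + cA) with hK
  have h1 : Real.exp (R_P / (R_A + R_P) * L + R_A * R_P / (R_A + R_P) * (cP + cA))
      = Real.exp K * (R_A / R_P) := by
    rw [show R_A / R_P = Real.exp (Real.log R_A - Real.log R_P) by
        rw [Real.exp_sub, Real.exp_log hRA, Real.exp_log hRP],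
      ← Real.exp_add, hK, hLval]
    congr 1
    have h12 : R_P / (R_A + R_P) = 1 - R_A / (R_A + R_P) := by
      field_simp
      ring
    rw [h12]; ring
  have h2 : ρ * Real.exp (-(R_A / (R_A + R_P)) * L + R_A * R_P / (R_A + R_P) * (cP + cA))
      = Real.exp K := by
    rw [show ρ = Real.exp (Real.log ρ) from (Real.exp_log hρ).symm, ← Real.exp_add, hK, hLval]
    congr 1
    have h12 : R_P / (R_A + R_P) = 1 - R_A / (R_A + R_P) := by
      field_simp
      ring
    rw [h12]; ring
  have h3 : ρ ^ (R_P / (R_A + R_P)) * ((R_A + R_P) / R_P) * (R_A / R_P) ^ (-(R_A / (R_A + R_P)))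
        * Real.exp (R_A * R_P / (R_A + R_P) * (cP + cA))
      = Real.exp K * ((R_A + R_P) / R_P) := by
    rw [Real.rpow_def_of_pos hρ, Real.rpow_def_of_pos (by positivity : (0:ℝ) < R_A / R_P),
      Real.log_div hRA.ne' hRP.ne']
    rw [show Real.exp (Real.log ρ * (R_P / (R_A + R_P))) *
          ((R_A + R_P) / R_P) * Real.exp ((Real.log R_A - Real.log R_P) * -(R_A / (R_A + R_P)))
          * Real.exp (R_A * R_P / (R_A + R_P) * (cP + cA))
        = Real.exp (Real.log ρ * (R_P / (R_A + R_P))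
            + (Real.log R_A - Real.log R_P) * -(R_A / (R_A + R_P))
            + R_A * R_P / (R_A + R_P) * (cP + cA)) * ((R_A + R_P) / R_P) by
        rw [Real.exp_add, Real.exp_add]; ring]
    congr 2
    rw [hK]; ring
  rw [h1, h2, h3]
  field_simp

lemma action_integrable_s9 (T aMax : ℝ) (hT : 0 < T) (a : ℝ → ℝ)
    (hma : Measurable a) (hba : ∀ s ∈ Set.Icc (0:ℝ) T, a s ∈ Set.Icc (0:ℝ) aMax)
    (g : ℝ → ℝ) (hg : Continuous g) :
    IntervalIntegrable (fun s => g (a s)) volume 0 T := by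
  rw [intervalIntegrable_iff_integrableOn_Icc_of_le hT.le]
  obtain ⟨M, hM⟩ := (isCompact_Icc : IsCompact (Set.Icc (0:ℝ) aMax)).exists_bound_of_continuousOn
    hg.continuousOn
  apply Measure.integrableOn_of_bounded (M := M) measure_Icc_lt_top.ne
    ((hg.measurable.comp hma).aestronglyMeasurable)
  rw [MeasureTheory.ae_restrict_iff' measurableSet_Icc]
  exact Filter.Eventually.of_forall fun s hs => hM _ (hba s hs)

lemma integral_bound (T aMax : ℝ) (hT : 0 < T) (k a : ℝ → ℝ) (hk : Continuous k)
    (hma : Measurable a) (hba : ∀ s ∈ Set.Icc (0:ℝ) T, a s ∈ Set.Icc (0:ℝ) aMax)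
    (astar : ℝ) (hmin : ∀ x ∈ Set.Icc (0:ℝ) aMax, k astar - astar ≤ k x - x) :
    T * (k astar - astar) ≤ (∫ s in (0:ℝ)..T, k (a s)) - (∫ s in (0:ℝ)..T, a s) := by
  have h1 : IntervalIntegrable (fun s => k (a s)) volume 0 T :=
    action_integrable_s9 T aMax hT a hma hba k hk
  have h2 : IntervalIntegrable a volume 0 T := by
    simpa using action_integrable_s9 T aMax hT a hma hba id continuous_id
  rw [← intervalIntegral.integral_sub h1 h2]
  have he : T * (k astar - astar) = ∫ _s in (0:ℝ)..T, (k astar - astar) := by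
    rw [intervalIntegral.integral_const, smul_eq_mul, sub_zero]
  rw [he]
  exact intervalIntegral.integral_mono_on hT.le intervalIntegrable_const (h1.sub h2)
    fun s hs => hmin _ (hba s hs)

/-- Lemma 3.3(v)b: if `α_P^high > α_A^low`, the supremum of `F` over deterministic
actions, `z`, `δ` and `γ > R_A z²` equals `G(a*, z*, α_P^high)`. -/
theorem sup_Q_gamma_high (R_A R_P ρ T aMax : ℝ) (k : ℝ → ℝ)
    (hRA : 0 < R_A) (hRP : 0 < R_P) (hρ : 0 < ρ) (hT : 0 < T) (haMax : 0 < aMax)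
    (hkcont : Continuous k) (hkconv : StrictConvexOn ℝ Set.univ k) (hkmono : StrictMono k)
    (astar : ℝ) (hastar_mem : astar ∈ Set.Icc (0 : ℝ) aMax)
    (hastar_min : ∀ x ∈ Set.Icc (0 : ℝ) aMax, k astar - astar ≤ k x - x)
    (αPhigh αAlow : ℝ) (hαA : 0 < αAlow) (hlt : αAlow < αPhigh) :
    IsLUB {x : ℝ | ∃ a z γ δ, IsAction T aMax a ∧ R_A * z ^ 2 < γ ∧
        x = Fobj R_A R_P ρ T k a z γ δ αPhigh αAlow}
      (Gobj R_A R_P ρ T k (fun _ => astar) (R_P / (R_A + R_P)) 0 αPhigh αPhigh) := by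
  have hs : 0 < R_A + R_P := by linarith
  have hαP : 0 < αPhigh := lt_trans hαA hlt
  set C : ℝ := ρ ^ (R_P / (R_A + R_P)) * ((R_A + R_P) / R_P)
      * (R_A / R_P) ^ (-(R_A / (R_A + R_P))) with hCdef
  have hCpos : 0 < C := by rw [hCdef]; positivity
  set c : ℝ := R_A * R_P / (R_A + R_P) with hcdef
  have hcpos : 0 < c := by rw [hcdef]; positivity
  set sstar : ℝ := T * (k astar - astar) + T * αPhigh / 2 * (R_A * R_P / (R_A + R_P))
    with hsstardef
  -- the value of the candidate supremum
  have hG : Gobj R_A R_P ρ T k (fun _ => astar) (R_P / (R_A + R_P)) 0 αPhigh αPhigh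
      = -(C * Real.exp (c * sstar)) := by
    have hE : (R_A * R_P / (R_A + R_P)) * ((∫ _s in (0:ℝ)..T, (k astar - astar))
        + 0 / 2 * T * (αPhigh - αPhigh)
        + T / 2 * (αPhigh * R_P * (1 - R_P / (R_A + R_P)) ^ 2
            + αPhigh * R_A * (R_P / (R_A + R_P)) ^ 2)) = c * sstar := by
      rw [intervalIntegral.integral_const, smul_eq_mul, sub_zero, hcdef, hsstardef]
      field_simp
      ring
    rw [Gobj, hE, ← hCdef, mul_assoc]
  rw [hG]
  constructor
  · -- upper bound
    rintro x ⟨a, z, γ, δ, ⟨hma, hba⟩, hγ, rfl⟩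
    set Ia : ℝ := ∫ s in (0:ℝ)..T, a s with hIa
    set Ik : ℝ := ∫ s in (0:ℝ)..T, k (a s) with hIk
    set cP : ℝ := -(1 - z) * Ia + (R_P * (1 - z) ^ 2 / 2 + γ / 2) * αPhigh * T with hcP
    set cA : ℝ := Ik - z * Ia + (R_A * z ^ 2 / 2 - γ / 2) * αAlow * T with hcA
    have hF : Fobj R_A R_P ρ T k a z γ δ αPhigh αAlow
        = -(Real.exp (R_P * (δ + cP)) + ρ * Real.exp (R_A * (cA - δ))) := by
      rw [Fobj, hcP, hcA, ← hIa, ← hIk]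
      ring_nf
    rw [hF]
    have hamgm := amgm_exp R_A R_P ρ hRA hRP hρ (R_P * (δ + cP)) (R_A * (cA - δ))
    have harg : R_A / (R_A + R_P) * (R_P * (δ + cP)) + R_P / (R_A + R_P) * (R_A * (cA - δ))
        = c * (cP + cA) := by
      rw [hcdef]; field_simp; ring
    rw [harg, ← hCdef] at hamgm
    have hstep : C * Real.exp (c * sstar) ≤ C * Real.exp (c * (cP + cA)) := by
      have hsle : sstar ≤ cP + cA := by
        have hintb := integral_bound T aMax hT k a hkcont hma hba astar hastar_min
        rw [← hIk, ← hIa] at hintb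
        have hq : R_A * R_P / (R_A + R_P) ≤ R_P * (1 - z) ^ 2 + R_A * z ^ 2 := by
          rw [div_le_iff₀ hs]
          nlinarith [sq_nonneg ((R_A + R_P) * z - R_P)]
        have h1 : T * αPhigh / 2 * (R_A * R_P / (R_A + R_P))
            ≤ T * αPhigh / 2 * (R_P * (1 - z) ^ 2 + R_A * z ^ 2) :=
          mul_le_mul_of_nonneg_left hq (by positivity)
        have h2 : 0 ≤ T / 2 * ((γ - R_A * z ^ 2) * (αPhigh - αAlow)) := by
          have := sub_pos.mpr hγ
          have := sub_pos.mpr hlt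
          positivity
        rw [hsstardef, hcP, hcA]
        linarith [h1, h2, hintb]
      exact mul_le_mul_of_nonneg_left
        (Real.exp_le_exp.mpr (mul_le_mul_of_nonneg_left hsle hcpos.le)) hCpos.le
    linarith [le_trans hstep hamgm]
  · -- least upper bound
    intro v hv
    by_contra hcon
    push_neg at hcon
    set B : ℝ := C * Real.exp (c * sstar) with hB
    have hBpos : 0 < B := by rw [hB]; positivity
    have hvB : B < -v := by linarith
    set θ : ℝ := c * (T * (αPhigh - αAlow) / 2) with hθ
    have hθpos : 0 < θ := by
      rw [hθ]
      have := sub_pos.mpr hlt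
      positivity
    set ε : ℝ := Real.log (-v / B) / (2 * θ) with hε
    have hlogpos : 0 < Real.log (-v / B) :=
      Real.log_pos ((one_lt_div hBpos).mpr hvB)
    have hεpos : 0 < ε := by rw [hε]; positivity
    set z : ℝ := R_P / (R_A + R_P) with hz
    set γ : ℝ := R_A * z ^ 2 + ε with hγdef
    set cP : ℝ := -(1 - z) * (T * astar) + (R_P * (1 - z) ^ 2 / 2 + γ / 2) * αPhigh * T with hcP
    set cA : ℝ := T * k astar - z * (T * astar) + (R_A * z ^ 2 / 2 - γ / 2) * αAlow * T with hcA
    obtain ⟨δ, hδ⟩ := attain_exp R_A R_P ρ hRA hRP hρ cP cA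
    have hmem : Fobj R_A R_P ρ T k (fun _ => astar) z γ δ αPhigh αAlow ∈
        {x : ℝ | ∃ a z γ δ, IsAction T aMax a ∧ R_A * z ^ 2 < γ ∧
          x = Fobj R_A R_P ρ T k a z γ δ αPhigh αAlow} :=
      ⟨fun _ => astar, z, γ, δ, ⟨measurable_const, fun s _ => hastar_mem⟩,
        by rw [hγdef]; linarith, rfl⟩
    have hFval : Fobj R_A R_P ρ T k (fun _ => astar) z γ δ αPhigh αAlow
        = -(C * Real.exp (c * (cP + cA))) := by
      have hFeq : Fobj R_A R_P ρ T k (fun _ => astar) z γ δ αPhigh αAlow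
          = -(Real.exp (R_P * (δ + cP)) + ρ * Real.exp (R_A * (cA - δ))) := by
        rw [Fobj, intervalIntegral.integral_const, intervalIntegral.integral_const,
          smul_eq_mul, smul_eq_mul, sub_zero, hcP, hcA]
        ring_nf
      rw [hFeq, hδ, ← hCdef, ← hcdef]
    have hsum : cP + cA = sstar + ε * (T * (αPhigh - αAlow) / 2) := by
      rw [hcP, hcA, hsstardef, hγdef, hz]
      field_simp
      ring
    have hexp : c * (cP + cA) = c * sstar + θ * ε := by
      rw [hsum, hθ]; ring
    have hlt2 : v < Fobj R_A R_P ρ T k (fun _ => astar) z γ δ αPhigh αAlow := by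
      rw [hFval, hexp]
      have h1 : θ * ε < Real.log (-v / B) := by
        rw [hε]
        rw [show θ * (Real.log (-v / B) / (2 * θ)) = Real.log (-v / B) / 2 by
          field_simp]
        linarith
      have h2 : Real.exp (c * sstar + θ * ε) < Real.exp (c * sstar) * (-v / B) := by
        rw [Real.exp_add]
        apply mul_lt_mul_of_pos_left _ (Real.exp_pos _)
        calc Real.exp (θ * ε) < Real.exp (Real.log (-v / B)) := Real.exp_lt_exp.mpr h1
          _ = -v / B := Real.exp_log (div_pos (by linarith) hBpos)
      have h3 : C * (Real.exp (c * sstar) * (-v / B)) = -v := by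
        rw [hB]; field_simp
      nlinarith [mul_lt_mul_of_pos_left h2 hCpos]
    exact absurd (hv hmem) (not_le.mpr hlt2)
end
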